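/- arXiv:2502.07187 — 7 statements merged into one kernel-verified Lean document; each statement's English description precedes it below -/
import Mathlib

section
/- There exists a learner A such that for every h* ∈ H_OTP, every n ≥ 1, and every sequence S = (x_1,…,x_n) ∈ ℕ^n, the transductive error satisfies L^T_{S,h*}(A) ≤ 2/n. In particular, H_OTP is transductively learnable. -/
open scoped Classical

noncomputable section

/-- Binary strings of length `d`, i.e. elements of `{0,1}^d`. -/
abbrev BStr (d : ℕ) := Fin d → Bool

/-- Entrywise XOR of two binary strings. -/
def bxor {d : ℕ} (A B : BStr d) : BStr d := fun i => xor (A i) (B i)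

/-- `σ₀(C)`: the positions at which `C` takes the value `0`. -/
def sigma0 {d : ℕ} (C : BStr d) : Finset (Fin d) := Finset.univ.filter fun i => C i = false

/-- `σ₁(C)`: the positions at which `C` takes the value `1`. -/
def sigma1 {d : ℕ} (C : BStr d) : Finset (Fin d) := Finset.univ.filter fun i => C i = true

/-- A binary string is balanced if it has as many `0`-entries as `1`-entries. -/
def BalancedStr {d : ℕ} (C : BStr d) : Prop := (sigma0 C).card = (sigma1 C).card

/-- The label space `Y = {0,1} × {0,1}^*`. -/
abbrev Label : Type := Bool × List Bool

/-- The hypothesis `h_{A,B} : ℕ → Y`, mapping `x` to `(0, A)` if `(A ⊕ B)(x mod d) = 0`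
and to `(1, B)` if `(A ⊕ B)(x mod d) = 1`. -/
def hyp {d : ℕ} (A B : BStr d) : ℕ → Label := fun x =>
  if hd : 0 < d then
    if bxor A B ⟨x % d, Nat.mod_lt x hd⟩ = true then (true, List.ofFn B)
    else (false, List.ofFn A)
  else (false, List.ofFn A)

/-- The secret-sharing hypothesis class `H_OTP`. -/
def HOTP : Set (ℕ → Label) :=
  { h | ∃ (d : ℕ) (A B : BStr d), 1 ≤ d ∧ BalancedStr (bxor A B) ∧ h = hyp A B }

/-- The training sequence obtained by labeling the points of `S` by `h` and removing
the `i`-th (labeled) point. -/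
def trainSeq {X Y : Type*} {n : ℕ} (S : Fin n → X) (h : X → Y) (i : Fin n) :
    List (X × Y) :=
  (List.ofFn fun j => (S j, h (S j))).eraseIdx i

/-- The transductive error `L^T_{S,h}(Alg)` of the learner `Alg` on the instance `(S, h)`. -/
def transErr {X Y : Type*} {n : ℕ} (Alg : List (X × Y) → X → Y) (S : Fin n → X)
    (h : X → Y) : ℝ :=
  (∑ i : Fin n, if Alg (trainSeq S h i) (S i) = h (S i) then (0 : ℝ) else 1) / n

/-- `Alg` is a transductive learner for the class `H`. -/
def TransLearner {X Y : Type*} (H : Set (X → Y)) (Alg : List (X × Y) → X → Y) : Prop :=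
  ∃ m : ℝ → ℕ, ∀ ε : ℝ, 0 < ε → ε < 1 → ∀ h ∈ H, ∀ (n : ℕ) (S : Fin n → X),
    m ε ≤ n → transErr Alg S h ≤ ε

/-- The class `H` is transductively learnable. -/
def TransLearnable {X Y : Type*} (H : Set (X → Y)) : Prop :=
  ∃ Alg : List (X × Y) → X → Y, TransLearner H Alg

/-- The empirical risk `L_S(h)`: the fraction of examples in `S` mislabeled by `h`. -/
def empRisk {X Y : Type*} (S : List (X × Y)) (h : X → Y) : ℝ :=
  ((S.map fun p => if h p.1 = p.2 then (0 : ℝ) else 1).sum) / S.length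

/-- The learner `Alg` is induced by the local regularizer `ψ : H × X → ℝ≥0`: whenever
the argmin set `M(S,x)` of `ψ(·, x)` over zero-empirical-risk hypotheses is nonempty,
`Alg S x` agrees with some hypothesis in `M(S,x)` at `x`. -/
def InducedBy {X Y : Type*} (H : Set (X → Y)) (ψ : H → X → NNReal)
    (Alg : List (X × Y) → X → Y) : Prop :=
  ∀ (S : List (X × Y)) (x : X),
    (∃ h : H, empRisk S h.1 = 0 ∧ ∀ g : H, empRisk S g.1 = 0 → ψ h x ≤ ψ g x) →
    ∃ h : H, empRisk S h.1 = 0 ∧ (∀ g : H, empRisk S g.1 = 0 → ψ h x ≤ ψ g x) ∧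
      Alg S x = h.1 x

/-- A local regularizer is locally injective if `ψ(·, x)` is injective for every `x`. -/
def LocallyInjective {X Y : Type*} (H : Set (X → Y)) (ψ : H → X → NNReal) : Prop :=
  ∀ x : X, Function.Injective fun h : H => ψ h x

/-- A class is generalized binary if each of its hypotheses has image of size at most 2. -/
def GeneralizedBinary {X Y : Type*} (H : Set (X → Y)) : Prop :=
  ∀ h ∈ H, ∃ y₁ y₂ : Y, ∀ x : X, h x = y₁ ∨ h x = y₂

/-- A class has distinct label sets if `im` is injective on it. -/
def DistinctLabelSets {X Y : Type*} (H : Set (X → Y)) : Prop :=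
  ∀ h ∈ H, ∀ h' ∈ H, Set.range h = Set.range h' → h = h'

/-- A class is GBDLS if it is generalized binary and has distinct label sets. -/
def GBDLS {X Y : Type*} (H : Set (X → Y)) : Prop :=
  GeneralizedBinary H ∧ DistinctLabelSets H

/-- `e(i)`: the standard basis string, with a single `1` in position `i`. -/
def evec {d : ℕ} (i : Fin d) : BStr d := fun j => decide (j = i)

/-- `C ⊕ e(x) ⊕ e(x')`: the string `C` with its `x`-th and `x'`-th entries flipped. -/
def flip2 {d : ℕ} (C : BStr d) (x x' : Fin d) : BStr d := bxor (bxor C (evec x)) (evec x')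

/-- The training sequence consisting of the examples `(s, h s)` for `s ∈ S`
(listed in increasing order). -/
def trainOn {d : ℕ} (S : Finset (Fin d)) (h : ℕ → Label) : List (ℕ × Label) :=
  (S.sort (· ≤ ·)).map fun s => ((s : ℕ), h (s : ℕ))

/-! ### Auxiliary material for the proof -/

/-- Reconstruction of a hypothesis from the two label strings. -/
def hypL (Al Bl : List Bool) : ℕ → Label := fun x =>
  if Al.length = 0 then (false, Al)
  else if xor (Al.getD (x % Al.length) false) (Bl.getD (x % Al.length) false) = true
    then (true, Bl) else (false, Al)

/-- The learner: if both a `0`-label and a `1`-label occur in the training data,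
reconstruct the hypothesis; otherwise predict the unique observed label. -/
def Alg0 (S : List (ℕ × Label)) (x : ℕ) : Label :=
  match S.find? (fun p => !p.2.1), S.find? (fun p => p.2.1) with
  | some p0, some p1 => hypL p0.2.2 p1.2.2 x
  | some p0, none => p0.2
  | none, some p1 => p1.2
  | none, none => (false, [])

lemma hypL_ofFn {d : ℕ} (hd : 0 < d) (A B : BStr d) :
    hypL (List.ofFn A) (List.ofFn B) = hyp A B := by
  funext x
  have hlen : (List.ofFn A).length = d := List.length_ofFn
  have hlenB : (List.ofFn B).length = d := List.length_ofFn
  have hxd : x % d < d := Nat.mod_lt x hd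
  have hA : (List.ofFn A).getD (x % d) false = A ⟨x % d, hxd⟩ := by
    rw [List.getD_eq_getElem _ _ (by omega)]
    simp
  have hB : (List.ofFn B).getD (x % d) false = B ⟨x % d, hxd⟩ := by
    rw [List.getD_eq_getElem _ _ (by omega)]
    simp
  simp only [hypL, hyp, hlen, hA, hB, dif_pos hd, if_neg (by omega : ¬ d = 0)]
  rfl

lemma hyp_label_false {d : ℕ} (hd : 0 < d) (A B : BStr d) (x : ℕ)
    (h : (hyp A B x).1 = false) : hyp A B x = (false, List.ofFn A) := by
  unfold hyp at *
  rw [dif_pos hd] at *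
  split at h <;> simp_all

lemma hyp_label_true {d : ℕ} (hd : 0 < d) (A B : BStr d) (x : ℕ)
    (h : (hyp A B x).1 = true) : hyp A B x = (true, List.ofFn B) := by
  unfold hyp at *
  rw [dif_pos hd] at *
  split at h <;> simp_all

lemma mem_trainSeq {n : ℕ} (S : Fin n → ℕ) (h : ℕ → Label) (i j : Fin n) (hij : j ≠ i) :
    (S j, h (S j)) ∈ trainSeq S h i := by
  unfold trainSeq
  rw [List.mem_eraseIdx_iff_getElem]
  refine ⟨(j : ℕ), by simp, by simpa using Fin.val_ne_of_ne hij, ?_⟩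
  simp

lemma trainSeq_label {n : ℕ} (S : Fin n → ℕ) (h : ℕ → Label) (i : Fin n)
    {p : ℕ × Label} (hp : p ∈ trainSeq S h i) : ∃ j : Fin n, p = (S j, h (S j)) := by
  unfold trainSeq at hp
  rw [List.mem_eraseIdx_iff_getElem] at hp
  obtain ⟨k, hk, -, hkp⟩ := hp
  have hk' : k < n := by simpa using hk
  exact ⟨⟨k, hk'⟩, by rw [← hkp]; simp⟩

/-- Correctness when both label types occur among the other points. -/
lemma alg_correct_both {d : ℕ} (hd : 0 < d) (A B : BStr d) {n : ℕ} (S : Fin n → ℕ)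
    (i : Fin n)
    (hf : ∃ j : Fin n, j ≠ i ∧ (hyp A B (S j)).1 = false)
    (ht : ∃ j : Fin n, j ≠ i ∧ (hyp A B (S j)).1 = true) :
    Alg0 (trainSeq S (hyp A B) i) (S i) = hyp A B (S i) := by
  set T := trainSeq S (hyp A B) i with hT
  obtain ⟨jf, hjf, hjf2⟩ := hf
  obtain ⟨jt, hjt, hjt2⟩ := ht
  have h0 : (T.find? (fun p => !p.2.1)).isSome := by
    rw [List.find?_isSome]
    exact ⟨_, mem_trainSeq S (hyp A B) i jf hjf, by simp [hjf2]⟩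
  have h1 : (T.find? (fun p => p.2.1)).isSome := by
    rw [List.find?_isSome]
    exact ⟨_, mem_trainSeq S (hyp A B) i jt hjt, by simp [hjt2]⟩
  obtain ⟨p0, hp0⟩ := Option.isSome_iff_exists.mp h0
  obtain ⟨p1, hp1⟩ := Option.isSome_iff_exists.mp h1
  have hp0mem := List.mem_of_find?_eq_some hp0
  have hp1mem := List.mem_of_find?_eq_some hp1
  have hp0f : p0.2.1 = false := by simpa using List.find?_some hp0
  have hp1t : p1.2.1 = true := by simpa using List.find?_some hp1
  obtain ⟨j0, hj0⟩ := trainSeq_label S (hyp A B) i hp0mem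
  obtain ⟨j1, hj1⟩ := trainSeq_label S (hyp A B) i hp1mem
  have e0 : p0.2 = (false, List.ofFn A) := by
    rw [hj0] at hp0f ⊢
    exact hyp_label_false hd A B _ hp0f
  have e1 : p1.2 = (true, List.ofFn B) := by
    rw [hj1] at hp1t ⊢
    exact hyp_label_true hd A B _ hp1t
  simp only [Alg0, hp0, hp1, e0, e1]
  rw [hypL_ofFn hd A B]

/-- Correctness when all points (including `i`) have `0`-labels and some `j ≠ i` exists. -/
lemma alg_correct_allfalse {d : ℕ} (hd : 0 < d) (A B : BStr d) {n : ℕ} (S : Fin n → ℕ)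
    (i : Fin n)
    (hall : ∀ j : Fin n, (hyp A B (S j)).1 = false)
    (hex : ∃ j : Fin n, j ≠ i) :
    Alg0 (trainSeq S (hyp A B) i) (S i) = hyp A B (S i) := by
  set T := trainSeq S (hyp A B) i with hT
  obtain ⟨j, hj⟩ := hex
  have h0 : (T.find? (fun p => !p.2.1)).isSome := by
    rw [List.find?_isSome]
    exact ⟨_, mem_trainSeq S (hyp A B) i j hj, by simp [hall j]⟩
  have h1 : T.find? (fun p => p.2.1) = none := by
    rw [List.find?_eq_none]
    intro p hp
    obtain ⟨k, hk⟩ := trainSeq_label S (hyp A B) i hp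
    simp [hk, hall k]
  obtain ⟨p0, hp0⟩ := Option.isSome_iff_exists.mp h0
  have hp0f : p0.2.1 = false := by simpa using List.find?_some hp0
  obtain ⟨j0, hj0⟩ := trainSeq_label S (hyp A B) i (List.mem_of_find?_eq_some hp0)
  have e0 : p0.2 = (false, List.ofFn A) := by
    rw [hj0] at hp0f ⊢
    exact hyp_label_false hd A B _ hp0f
  simp only [Alg0, hp0, h1, e0]
  exact (hyp_label_false hd A B _ (hall i)).symm

/-- Correctness when all points (including `i`) have `1`-labels and some `j ≠ i` exists. -/
lemma alg_correct_alltrue {d : ℕ} (hd : 0 < d) (A B : BStr d) {n : ℕ} (S : Fin n → ℕ)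
    (i : Fin n)
    (hall : ∀ j : Fin n, (hyp A B (S j)).1 = true)
    (hex : ∃ j : Fin n, j ≠ i) :
    Alg0 (trainSeq S (hyp A B) i) (S i) = hyp A B (S i) := by
  set T := trainSeq S (hyp A B) i with hT
  obtain ⟨j, hj⟩ := hex
  have h1 : (T.find? (fun p => p.2.1)).isSome := by
    rw [List.find?_isSome]
    exact ⟨_, mem_trainSeq S (hyp A B) i j hj, by simp [hall j]⟩
  have h0 : T.find? (fun p => !p.2.1) = none := by
    rw [List.find?_eq_none]
    intro p hp
    obtain ⟨k, hk⟩ := trainSeq_label S (hyp A B) i hp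
    simp [hk, hall k]
  obtain ⟨p1, hp1⟩ := Option.isSome_iff_exists.mp h1
  have hp1t : p1.2.1 = true := by simpa using List.find?_some hp1
  obtain ⟨j1, hj1⟩ := trainSeq_label S (hyp A B) i (List.mem_of_find?_eq_some hp1)
  have e1 : p1.2 = (true, List.ofFn B) := by
    rw [hj1] at hp1t ⊢
    exact hyp_label_true hd A B _ hp1t
  simp only [Alg0, hp1, h0, e1]
  exact (hyp_label_true hd A B _ (hall i)).symm

/-- The number of mistakes of `Alg0` is at most `2`. -/
lemma alg_err_le (h : ℕ → Label) (hh : h ∈ HOTP) {n : ℕ} (S : Fin n → ℕ) :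
    ((Finset.univ.filter fun i : Fin n =>
      ¬ Alg0 (trainSeq S h i) (S i) = h (S i)).card : ℝ) ≤ 2 := by
  obtain ⟨d, A, B, hd1, -, rfl⟩ := hh
  have hd : 0 < d := hd1
  by_cases hn : n ≤ 1
  · have h1 : (Finset.univ.filter fun i : Fin n =>
        ¬ Alg0 (trainSeq S (hyp A B) i) (S i) = hyp A B (S i)).card ≤ 2 := by
      have := Finset.card_filter_le Finset.univ fun i : Fin n =>
        ¬ Alg0 (trainSeq S (hyp A B) i) (S i) = hyp A B (S i)
      simp only [Finset.card_univ, Fintype.card_fin] at this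
      omega
    exact_mod_cast h1
  · push_neg at hn
    set F : Finset (Fin n) := Finset.univ.filter fun j => (hyp A B (S j)).1 = false
    set T : Finset (Fin n) := Finset.univ.filter fun j => (hyp A B (S j)).1 = true
    have key : ∀ i : Fin n, ¬ Alg0 (trainSeq S (hyp A B) i) (S i) = hyp A B (S i) →
        F = {i} ∨ T = {i} := by
      intro i hwrong
      have hex : ∃ j : Fin n, j ≠ i :=
        Fintype.exists_ne_of_one_lt_card (by simpa using hn) i
      by_cases hf : ∃ j : Fin n, j ≠ i ∧ (hyp A B (S j)).1 = false
      · by_cases ht : ∃ j : Fin n, j ≠ i ∧ (hyp A B (S j)).1 = true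
        · exact absurd (alg_correct_both hd A B S i hf ht) hwrong
        · push_neg at ht
          right
          ext k
          simp only [T, Finset.mem_filter, Finset.mem_univ, true_and, Finset.mem_singleton]
          constructor
          · intro hk
            by_contra hki
            exact absurd hk (by simpa using ht k hki)
          · intro hk
            rw [hk]
            by_contra hkt
            have hall : ∀ j : Fin n, (hyp A B (S j)).1 = false := by
              intro j
              by_cases hji : j = i
              · rw [hji]
                cases hb : (hyp A B (S i)).1
                · rfl
                · exact absurd hb hkt
              · have := ht j hji
                cases hb : (hyp A B (S j)).1
                · rfl
                · exact absurd hb (by simpa using this)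
            exact absurd (alg_correct_allfalse hd A B S i hall hex) hwrong
      · push_neg at hf
        left
        ext k
        simp only [F, Finset.mem_filter, Finset.mem_univ, true_and, Finset.mem_singleton]
        constructor
        · intro hk
          by_contra hki
          exact absurd hk (by simpa using hf k hki)
        · intro hk
          rw [hk]
          by_contra hkf
          have hall : ∀ j : Fin n, (hyp A B (S j)).1 = true := by
            intro j
            by_cases hji : j = i
            · rw [hji]
              cases hb : (hyp A B (S i)).1
              · exact absurd hb hkf
              · rfl
            · have := hf j hji
              cases hb : (hyp A B (S j)).1
              · exact absurd hb (by simpa using this)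
              · rfl
          exact absurd (alg_correct_alltrue hd A B S i hall hex) hwrong
    have hsub : (Finset.univ.filter fun i : Fin n =>
        ¬ Alg0 (trainSeq S (hyp A B) i) (S i) = hyp A B (S i)) ⊆
        (Finset.univ.filter fun i : Fin n => F = {i}) ∪
        (Finset.univ.filter fun i : Fin n => T = {i}) := by
      intro i hi
      simp only [Finset.mem_filter, Finset.mem_univ, true_and] at hi
      rcases key i hi with hF | hT
      · exact Finset.mem_union_left _ (by simp [hF])
      · exact Finset.mem_union_right _ (by simp [hT])
    have c1 : (Finset.univ.filter fun i : Fin n => F = {i}).card ≤ 1 := by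
      apply Finset.card_le_one.mpr
      intro a ha b hb
      simp only [Finset.mem_filter] at ha hb
      have := ha.2.symm.trans hb.2
      simpa using this
    have c2 : (Finset.univ.filter fun i : Fin n => T = {i}).card ≤ 1 := by
      apply Finset.card_le_one.mpr
      intro a ha b hb
      simp only [Finset.mem_filter] at ha hb
      have := ha.2.symm.trans hb.2
      simpa using this
    have hcard : (Finset.univ.filter fun i : Fin n =>
        ¬ Alg0 (trainSeq S (hyp A B) i) (S i) = hyp A B (S i)).card ≤ 2 := by
      calc _ ≤ ((Finset.univ.filter fun i : Fin n => F = {i}) ∪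
            (Finset.univ.filter fun i : Fin n => T = {i})).card := Finset.card_le_card hsub
        _ ≤ _ + _ := Finset.card_union_le _ _
        _ ≤ 2 := by omega
    exact_mod_cast hcard

/-- The transductive error of `Alg0` is at most `2/n`. -/
lemma alg_transErr (h : ℕ → Label) (hh : h ∈ HOTP) {n : ℕ} (hn : 1 ≤ n) (S : Fin n → ℕ) :
    transErr Alg0 S h ≤ 2 / (n : ℝ) := by
  have hnpos : (0 : ℝ) < n := by exact_mod_cast hn
  unfold transErr
  rw [div_le_div_iff_of_pos_right hnpos]
  refine le_trans (le_of_eq ?_) (alg_err_le h hh S)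
  rw [Finset.card_filter]
  push_cast
  apply Finset.sum_congr rfl
  intro i _
  by_cases hc : Alg0 (trainSeq S h i) (S i) = h (S i) <;> simp [hc]

/-- some learner achieves transductive error at most `2/n` on every
transductive instance for `H_OTP` with `n ≥ 1` points; in particular `H_OTP` is
transductively learnable. -/
theorem statement1 :
    (∃ Alg : List (ℕ × Label) → ℕ → Label,
      ∀ h ∈ HOTP, ∀ n : ℕ, 1 ≤ n → ∀ S : Fin n → ℕ,
        transErr Alg S h ≤ 2 / (n : ℝ)) ∧
    TransLearnable HOTP := by
  have main : ∀ h ∈ HOTP, ∀ n : ℕ, 1 ≤ n → ∀ S : Fin n → ℕ,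
      transErr Alg0 S h ≤ 2 / (n : ℝ) := fun h hh n hn S => alg_transErr h hh hn S
  refine ⟨⟨Alg0, main⟩, ⟨Alg0, ⟨fun ε => max 1 ⌈2 / ε⌉₊, ?_⟩⟩⟩
  intro ε hε0 _ h hh n S hmn
  have hn1 : 1 ≤ n := le_trans (le_max_left _ _) hmn
  have hnpos : (0 : ℝ) < n := by exact_mod_cast hn1
  refine (main h hh n hn1 S).trans ?_
  have h2 : (2 : ℝ) / ε ≤ n :=
    le_trans (Nat.le_ceil _) (by exact_mod_cast le_trans (le_max_right _ _) hmn)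
  have h3 : (2 : ℝ) ≤ n * ε := (div_le_iff₀ hε0).mp h2
  rw [div_le_iff₀ hnpos]
  linarith
end
end

section
/- Let Y be a set and let F be a finite nonempty set of functions f : {1,2,3} → Y such that every f ∈ F satisfies |im(f)| ≤ 2 and the map f ↦ im(f) is injective on F. Then there exist f ∈ F and i ∈ {1,2,3} such that f has no i-neighbor in F, i.e., there is no g ∈ F with g(j) = f(j) for all j ≠ i and g(i) ≠ f(i). -/
open scoped Classical

noncomputable section

/-- if `F` is a finite nonempty family of functions `{1,2,3} → Y`, each
with image of size at most 2, on which `f ↦ im(f)` is injective, then some `f ∈ F`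
has no `i`-neighbor in `F` for some coordinate `i`. -/
theorem statement5 {Y : Type*} (F : Set (Fin 3 → Y)) (hfin : F.Finite)
    (hne : F.Nonempty)
    (hbin : ∀ f ∈ F, ∃ y₁ y₂ : Y, ∀ i : Fin 3, f i = y₁ ∨ f i = y₂)
    (hinj : ∀ f ∈ F, ∀ g ∈ F, Set.range f = Set.range g → f = g) :
    ∃ f ∈ F, ∃ i : Fin 3,
      ¬ ∃ g ∈ F, (∀ j : Fin 3, j ≠ i → g j = f j) ∧ g i ≠ f i := by
  by_contra hcon
  push_neg at hcon
  have key : ∀ f ∈ F, ∀ i j k : Fin 3, i ≠ j → j ≠ k → i ≠ k →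
      f i = f k → f j ≠ f i → False := by
    intro f hf i j k hij hjk hik hfik hfji
    obtain ⟨g, hg, hgeq, hgne⟩ := hcon f hf i
    have hgj : g j = f j := hgeq j (Ne.symm hij)
    have hgk : g k = f k := hgeq k (Ne.symm hik)
    obtain ⟨y₁, y₂, hy⟩ := hbin g hg
    have hgi : g i = f j := by
      have h1 := hy i; have h2 := hy j; have h3 := hy k
      rw [hgj] at h2; rw [hgk, ← hfik] at h3
      rcases h1 with h1 | h1 <;> rcases h2 with h2 | h2 <;> rcases h3 with h3 | h3 <;>
        simp_all
    have cover : ∀ x : Fin 3, x = i ∨ x = j ∨ x = k := by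
      intro x
      have d1 : i.val ≠ j.val := fun h => hij (Fin.ext h)
      have d2 : j.val ≠ k.val := fun h => hjk (Fin.ext h)
      have d3 : i.val ≠ k.val := fun h => hik (Fin.ext h)
      have l1 := i.isLt; have l2 := j.isLt; have l3 := k.isLt; have l4 := x.isLt
      refine (?_ : x.val = i.val ∨ x.val = j.val ∨ x.val = k.val).imp Fin.ext
        (Or.imp Fin.ext Fin.ext)
      omega
    have hr : Set.range g = Set.range f := by
      ext y
      constructor
      · rintro ⟨x, rfl⟩
        rcases cover x with h | h | h <;> rw [h]
        · exact ⟨j, hgi.symm⟩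
        · exact ⟨j, hgj.symm⟩
        · exact ⟨k, hgk.symm⟩
      · rintro ⟨x, rfl⟩
        rcases cover x with h | h | h <;> rw [h]
        · exact ⟨k, hgk.trans hfik.symm⟩
        · exact ⟨i, hgi⟩
        · exact ⟨k, hgk⟩
    have := hinj g hg f hf hr
    exact hgne (by rw [this])
  have nonconst : ∀ f ∈ F, (¬ (f 0 = f 1 ∧ f 1 = f 2)) → False := by
    intro f hf hnc
    by_cases h01 : f 0 = f 1
    · by_cases h12 : f 1 = f 2
      · exact hnc ⟨h01, h12⟩
      · exact key f hf 0 2 1 (by decide) (by decide) (by decide) h01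
          (fun h => h12 (h01.symm.trans h.symm))
    · by_cases h12 : f 1 = f 2
      · exact key f hf 1 0 2 (by decide) (by decide) (by decide) h12 h01
      · have h02 : f 0 = f 2 := by
          obtain ⟨y₁, y₂, hy⟩ := hbin f hf
          rcases hy 0 with h1 | h1 <;> rcases hy 1 with h2 | h2 <;>
            rcases hy 2 with h3 | h3 <;> simp_all
        exact key f hf 0 1 2 (by decide) (by decide) (by decide) h02
          (fun h => h01 h.symm)
  obtain ⟨f, hf⟩ := hne
  by_cases hc : f 0 = f 1 ∧ f 1 = f 2
  · obtain ⟨g, hg, hgeq, hgne⟩ := hcon f hf 0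
    have hg1 : g 1 = f 1 := hgeq 1 (by decide)
    have hg2 : g 2 = f 2 := hgeq 2 (by decide)
    refine nonconst g hg fun ⟨e01, e12⟩ => ?_
    exact hgne (e01.trans (hg1.trans hc.1.symm))
  · exact nonconst f hf hc
end
end

section
/- Let H ⊆ Y^X be a countable hypothesis class. Then H can be transductively learned by a local regularizer if and only if H can be transductively learned by a locally injective local regularizer. -/
open scoped Classical

noncomputable section

/-- Auxiliary: any countable-domain map into `Lex (NNReal × ℕ)` can be realized
order-faithfully by an `NNReal`-valued function. -/
lemma aux6 {α : Type*} [Countable α] (F : α → Lex (NNReal × ℕ)) :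
    ∃ u : α → NNReal, ∀ h g, u h ≤ u g ↔ F h ≤ F g := by
  haveI : Countable ↥(Set.range F) := (Set.countable_range F).to_subtype
  obtain ⟨e⟩ := Order.embedding_from_countable_to_dense ↥(Set.range F) ℚ
  refine ⟨fun a => (Real.exp (e ⟨F a, Set.mem_range_self a⟩)).toNNReal, ?_⟩
  have hm : StrictMono fun q : ℚ => (Real.exp q).toNNReal := fun a b hab =>
    (Real.toNNReal_lt_toNNReal_iff (Real.exp_pos _)).mpr
      (Real.exp_lt_exp.mpr (by exact_mod_cast hab))
  intro h g
  rw [hm.le_iff_le, e.le_iff_le, Subtype.mk_le_mk]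

/-- a countable class can be transductively learned by a local
regularizer iff it can be transductively learned by a locally injective one. -/
theorem statement6 {X Y : Type*} (H : Set (X → Y)) (hc : H.Countable) :
    (∃ ψ : H → X → NNReal,
        ∀ Alg : List (X × Y) → X → Y, InducedBy H ψ Alg → TransLearner H Alg) ↔
    (∃ ψ : H → X → NNReal, LocallyInjective H ψ ∧
        ∀ Alg : List (X × Y) → X → Y, InducedBy H ψ Alg → TransLearner H Alg) := by
  constructor
  · rintro ⟨ψ, hψ⟩
    haveI : Countable ↥H := hc.to_subtype
    obtain ⟨f, hf⟩ : ∃ f : ↥H → ℕ, Function.Injective f :=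
      Countable.exists_injective_nat ↥H
    choose u hu using fun x : X => aux6 (fun h : ↥H => toLex (ψ h x, f h))
    refine ⟨fun h x => u x h, ?_, ?_⟩
    · -- locally injective
      intro x h g hfg
      have h1 : toLex (ψ h x, f h) = toLex (ψ g x, f g) :=
        le_antisymm ((hu x h g).mp (le_of_eq hfg)) ((hu x g h).mp (ge_of_eq hfg))
      have h2 : f h = f g := by
        have := congrArg (fun p => (ofLex p).2) h1
        simpa using this
      exact hf h2
    · -- every learner induced by the new regularizer is also induced by ψ
      intro Alg hAlg
      apply hψ
      intro S x hx
      obtain ⟨h, hh0, hhmin⟩ := hx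
      -- pick the ψ-minimizer with least f-value
      have hP : ∃ n : ℕ, ∃ g : ↥H, empRisk S g.1 = 0 ∧
          (∀ g' : ↥H, empRisk S g'.1 = 0 → ψ g x ≤ ψ g' x) ∧ f g = n :=
        ⟨f h, h, hh0, hhmin, rfl⟩
      obtain ⟨h₀, h₀0, h₀min, hfh₀⟩ := Nat.find_spec hP
      -- h₀ is a minimizer of the new regularizer among zero-risk hypotheses
      have h₀min' : ∀ g : ↥H, empRisk S g.1 = 0 → u x h₀ ≤ u x g := by
        intro g hg0
        rw [hu]
        have hle₀ : ψ h₀ x ≤ ψ g x := h₀min g hg0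
        rcases lt_or_eq_of_le hle₀ with hlt | heq
        · exact Prod.Lex.le_iff.mpr (Or.inl hlt)
        · refine Prod.Lex.le_iff.mpr (Or.inr ⟨heq, ?_⟩)
          have hgmin : ∀ g' : ↥H, empRisk S g'.1 = 0 → ψ g x ≤ ψ g' x := by
            intro g' hg'0
            exact heq ▸ h₀min g' hg'0
          have : Nat.find hP ≤ f g := Nat.find_le ⟨g, hg0, hgmin, rfl⟩
          show f h₀ ≤ f g
          omega
      -- apply the induced-by hypothesis for the new regularizer
      obtain ⟨h₁, h₁0, h₁min, hAlgeq⟩ := hAlg S x ⟨h₀, h₀0, h₀min'⟩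
      refine ⟨h₁, h₁0, ?_, hAlgeq⟩
      intro g hg0
      have := (hu x h₁ g).mp (h₁min g hg0)
      rcases Prod.Lex.le_iff.mp this with hlt | ⟨heq, _⟩
      · exact le_of_lt hlt
      · exact le_of_eq heq
  · rintro ⟨ψ, _, h⟩
    exact ⟨ψ, h⟩
end
end

section
/- For every locally injective local regularizer ψ : H_OTP × ℕ → ℝ≥0, every learner A induced by ψ, and every d ≥ 1, there exist a sequence S of 2d distinct points in ℕ and a hypothesis h* ∈ H_OTP such that the transductive error satisfies L^T_{S,h*}(A) ≥ 1/4. -/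
open scoped Classical

noncomputable section

section A
variable {D : ℕ}

lemma bxor_cancel_left (P Z : BStr D) : bxor P (bxor P Z) = Z := by
  funext i; simp only [bxor]; cases P i <;> cases Z i <;> rfl

lemma bxor_cancel_right (Z Q : BStr D) : bxor (bxor Z Q) Q = Z := by
  funext i; simp only [bxor]; cases Q i <;> cases Z i <;> rfl

lemma mem_sigma0 {C : BStr D} {z : Fin D} : z ∈ sigma0 C ↔ C z = false := by
  simp [sigma0]

lemma mem_sigma1 {C : BStr D} {z : Fin D} : z ∈ sigma1 C ↔ C z = true := by
  simp [sigma1]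

lemma card_sigma_add (C : BStr D) : (sigma0 C).card + (sigma1 C).card = D := by
  have h : sigma1 C = Finset.univ.filter fun i => ¬ (C i = false) := by
    ext z; simp [sigma1]
  rw [sigma0, h, Finset.card_filter_add_card_filter_not]
  simp

lemma flip2_left {C : BStr D} {x w : Fin D} (h : x ≠ w) : flip2 C x w x = !(C x) := by
  simp [flip2, bxor, evec, h]

lemma flip2_right {C : BStr D} {x w : Fin D} (h : x ≠ w) : flip2 C x w w = !(C w) := by
  simp [flip2, bxor, evec, Ne.symm h]

lemma flip2_other {C : BStr D} {x w z : Fin D} (hx : z ≠ x) (hw : z ≠ w) :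
    flip2 C x w z = C z := by
  simp [flip2, bxor, evec, hx, hw]

lemma flip2_flip2 {C : BStr D} {x w : Fin D} : flip2 (flip2 C x w) x w = C := by
  funext z; simp only [flip2, bxor]; cases C z <;> cases evec x z <;> cases evec w z <;> rfl

lemma balancedStr_flip2 {C : BStr D} {x w : Fin D} (hb : BalancedStr C)
    (hx : C x = false) (hw : C w = true) : BalancedStr (flip2 C x w) := by
  have hxw : x ≠ w := by rintro rfl; rw [hx] at hw; cases hw
  have h0 : sigma0 (flip2 C x w) = insert w ((sigma0 C).erase x) := by
    ext z
    simp only [mem_sigma0, Finset.mem_insert, Finset.mem_erase]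
    rcases eq_or_ne z x with rfl | hzx
    · simp [flip2_left hxw, hx, hxw]
    rcases eq_or_ne z w with rfl | hzw
    · simp [flip2_right hxw, hw]
    · simp [flip2_other hzx hzw, hzx, hzw, mem_sigma0]
  have h1 : sigma1 (flip2 C x w) = insert x ((sigma1 C).erase w) := by
    ext z
    simp only [mem_sigma1, Finset.mem_insert, Finset.mem_erase]
    rcases eq_or_ne z x with rfl | hzx
    · simp [flip2_left hxw, hx]
    rcases eq_or_ne z w with rfl | hzw
    · simp [flip2_right hxw, hw, Ne.symm hxw]
    · simp [flip2_other hzx hzw, hzx, hzw, mem_sigma1]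
  have hw0 : w ∉ (sigma0 C).erase x := by
    simp [Finset.mem_erase, mem_sigma0, hw]
  have hx1 : x ∉ (sigma1 C).erase w := by
    simp [Finset.mem_erase, mem_sigma1, hx]
  have hxm : x ∈ sigma0 C := mem_sigma0.2 hx
  have hwm : w ∈ sigma1 C := mem_sigma1.2 hw
  have hbe : (sigma0 C).card = (sigma1 C).card := hb
  unfold BalancedStr
  rw [h0, h1, Finset.card_insert_of_notMem hw0, Finset.card_insert_of_notMem hx1,
    Finset.card_erase_of_mem hxm, Finset.card_erase_of_mem hwm]
  have c0 : 1 ≤ (sigma0 C).card := Finset.card_pos.2 ⟨x, hxm⟩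
  have c1 : 1 ≤ (sigma1 C).card := Finset.card_pos.2 ⟨w, hwm⟩
  omega

end A

section B
variable {D : ℕ}

lemma hyp_mem (hD : 1 ≤ D) {A B : BStr D} (h : BalancedStr (bxor A B)) :
    hyp A B ∈ HOTP := ⟨D, A, B, hD, h, rfl⟩

lemma hyp_apply (hD : 0 < D) (A B : BStr D) (x : Fin D) :
    hyp A B (x : ℕ) =
      if bxor A B x = true then (true, List.ofFn B) else (false, List.ofFn A) := by
  unfold hyp
  rw [dif_pos hD]
  have : (⟨(x : ℕ) % D, Nat.mod_lt _ hD⟩ : Fin D) = x := by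
    apply Fin.ext
    simp [Nat.mod_eq_of_lt x.isLt]
  rw [this]

lemma hyp_apply_false (hD : 0 < D) {A B : BStr D} {x : Fin D} (h : bxor A B x = false) :
    hyp A B (x : ℕ) = (false, List.ofFn A) := by
  rw [hyp_apply hD, h]; simp

lemma hyp_apply_true (hD : 0 < D) {A B : BStr D} {x : Fin D} (h : bxor A B x = true) :
    hyp A B (x : ℕ) = (true, List.ofFn B) := by
  rw [hyp_apply hD, h]; simp

/-- extension of ψ to all functions -/
def Psi (ψ : HOTP → ℕ → NNReal) (f : ℕ → Label) (x : ℕ) : NNReal :=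
  if hf : f ∈ HOTP then ψ ⟨f, hf⟩ x else 0

lemma Psi_mem (ψ : HOTP → ℕ → NNReal) {f : ℕ → Label} (hf : f ∈ HOTP) (x : ℕ) :
    Psi ψ f x = ψ ⟨f, hf⟩ x := by
  simp [Psi, hf]

end B

lemma list_sum_indicator_eq_zero {α : Type*} (l : List α) (q : α → Prop) :
    ((l.map fun p => if q p then (0 : ℝ) else 1).sum = 0) ↔ ∀ p ∈ l, q p := by
  induction l with
  | nil => simp
  | cons a l ih =>
    simp only [List.map_cons, List.sum_cons, List.mem_cons]
    have hnn : 0 ≤ (l.map fun p => if q p then (0 : ℝ) else 1).sum := by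
      apply List.sum_nonneg
      intro x hx
      simp only [List.mem_map] at hx
      obtain ⟨p, _, rfl⟩ := hx
      split <;> norm_num
    constructor
    · intro h
      by_cases hqa : q a
      · rw [if_pos hqa] at h
        rw [zero_add] at h
        rcases ih.1 h with h2
        rintro p (rfl | hp)
        · exact hqa
        · exact h2 p hp
      · rw [if_neg hqa] at h
        nlinarith
    · intro h
      rw [if_pos (h a (Or.inl rfl)), zero_add]
      exact ih.2 fun p hp => h p (Or.inr hp)

lemma empRisk_eq_zero_iff {L : List (ℕ × Label)} (hL : L ≠ []) (g : ℕ → Label) :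
    empRisk L g = 0 ↔ ∀ p ∈ L, g p.1 = p.2 := by
  unfold empRisk
  have hlen : (L.length : ℝ) ≠ 0 := by
    simp [List.length_eq_zero_iff, hL]
  rw [div_eq_zero_iff]
  simp only [hlen, or_false]
  exact list_sum_indicator_eq_zero L fun p => g p.1 = p.2

section C
variable {D : ℕ}

lemma hyp_cases {d' : ℕ} (A' B' : BStr d') (y : ℕ) :
    hyp A' B' y = (false, List.ofFn A') ∨ hyp A' B' y = (true, List.ofFn B') := by
  unfold hyp
  split
  · split
    · right; rfl
    · left; rfl
  · left; rfl

lemma hyp_false_label {d' : ℕ} {A' B' : BStr d'} {y : ℕ} {s : List Bool}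
    (h : hyp A' B' y = (false, s)) : List.ofFn A' = s := by
  rcases hyp_cases A' B' y with h' | h'
  · rw [h'] at h; exact congrArg Prod.snd h
  · rw [h'] at h; exact absurd (congrArg Prod.fst h) (by simp)

lemma hyp_true_label {d' : ℕ} {A' B' : BStr d'} {y : ℕ} {s : List Bool}
    (h : hyp A' B' y = (true, s)) : List.ofFn B' = s := by
  rcases hyp_cases A' B' y with h' | h'
  · rw [h'] at h; exact absurd (congrArg Prod.fst h) (by simp)
  · rw [h'] at h; exact congrArg Prod.snd h

lemma eq_of_sigma0_eq {C C' : BStr D} (h : sigma0 C = sigma0 C') : C = C' := by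
  funext z
  have h1 : z ∈ sigma0 C ↔ z ∈ sigma0 C' := by rw [h]
  rw [mem_sigma0, mem_sigma0] at h1
  cases hc : C z <;> cases hc' : C' z <;> simp_all

lemma two_card_sigma0 {C : BStr D} (hb : BalancedStr C) : 2 * (sigma0 C).card = D := by
  have h1 := card_sigma_add C
  have h2 : (sigma0 C).card = (sigma1 C).card := hb
  omega

lemma balanced_superset_structure {C C' : BStr D} {x : Fin D}
    (hbC : BalancedStr C) (hbC' : BalancedStr C')
    (hx : C x = false) (hsub : ∀ z, z ∈ sigma0 C → z ≠ x → z ∈ sigma0 C') :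
    C' = C ∨ ∃ w, C w = true ∧ C' = flip2 C x w := by
  have hxm : x ∈ sigma0 C := mem_sigma0.2 hx
  have hsub' : (sigma0 C).erase x ⊆ sigma0 C' := by
    intro z hz
    rw [Finset.mem_erase] at hz
    exact hsub z hz.2 hz.1
  have hcc : (sigma0 C').card = (sigma0 C).card := by
    have := two_card_sigma0 hbC
    have := two_card_sigma0 hbC'
    omega
  have hdc : ((sigma0 C') \ ((sigma0 C).erase x)).card = 1 := by
    rw [Finset.card_sdiff_of_subset hsub', Finset.card_erase_of_mem hxm, hcc]
    have : 1 ≤ (sigma0 C).card := Finset.card_pos.2 ⟨x, hxm⟩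
    omega
  obtain ⟨v, hv⟩ := Finset.card_eq_one.1 hdc
  have hset : sigma0 C' = insert v ((sigma0 C).erase x) := by
    have hu := Finset.sdiff_union_of_subset hsub'
    rw [hv] at hu
    rw [← hu, Finset.insert_eq]
  have hvnot : v ∉ (sigma0 C).erase x := by
    have : v ∈ (sigma0 C') \ ((sigma0 C).erase x) := by rw [hv]; exact Finset.mem_singleton_self v
    exact (Finset.mem_sdiff.1 this).2
  by_cases hvx : v = x
  · left
    subst hvx
    apply eq_of_sigma0_eq
    rw [hset, Finset.insert_erase hxm]
  · right
    have hvC : C v = true := by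
      have : v ∉ sigma0 C := by
        intro hmem
        exact hvnot (Finset.mem_erase.2 ⟨hvx, hmem⟩)
      rw [mem_sigma0] at this
      cases h : C v
      · exact absurd h this
      · rfl
    refine ⟨v, hvC, ?_⟩
    have hxv : x ≠ v := fun h => hvx h.symm
    funext z
    have hz : C' z = false ↔ z ∈ insert v ((sigma0 C).erase x) := by
      rw [← hset, mem_sigma0]
    rcases eq_or_ne z x with rfl | hzx
    · have : ¬ (C' z = false) := by
        rw [hz]
        simp only [Finset.mem_insert, Finset.mem_erase]
        push_neg
        exact ⟨fun h => hvx h.symm, fun h => absurd rfl h⟩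
      rw [flip2_left hxv]
      rw [hx]
      cases h : C' z
      · exact absurd h this
      · rfl
    rcases eq_or_ne z v with rfl | hzv
    · have : C' z = false := hz.2 (Finset.mem_insert_self _ _)
      rw [this, flip2_right hxv, hvC]
      rfl
    · rw [flip2_other hzx hzv]
      have hiff : C' z = false ↔ C z = false := by
        rw [hz]
        simp only [Finset.mem_insert, Finset.mem_erase]
        constructor
        · rintro (rfl | ⟨-, hm⟩)
          · exact absurd rfl hzv
          · exact mem_sigma0.1 hm
        · intro h
          exact Or.inr ⟨hzx, mem_sigma0.2 h⟩
      cases hc : C z <;> cases hc' : C' z <;> simp_all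
end C

section Dw
variable (ψ : HOTP → ℕ → NNReal) (Alg : List (ℕ × Label) → ℕ → Label)

/-- indices where the regularizer prefers a flipped alternative in the all-0 world -/
def Bad0 {D : ℕ} (P Q : BStr D) : Finset (Fin D) :=
  Finset.univ.filter fun x => bxor P Q x = false ∧ ∃ w, bxor P Q w = true ∧
    Psi ψ (hyp P (bxor P (flip2 (bxor P Q) x w))) x < Psi ψ (hyp P Q) x

def Bad1 {D : ℕ} (P Q : BStr D) : Finset (Fin D) :=
  Finset.univ.filter fun x => bxor P Q x = true ∧ ∃ w, bxor P Q w = false ∧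
    Psi ψ (hyp (bxor (flip2 (bxor P Q) x w) Q) Q) x < Psi ψ (hyp P Q) x

lemma transErr_ge_card {n : ℕ} (S : Fin n → ℕ) (h : ℕ → Label) (E : Finset (Fin n))
    (hE : ∀ i ∈ E, Alg (trainSeq S h i) (S i) ≠ h (S i)) :
    (E.card : ℝ) / n ≤ transErr Alg S h := by
  unfold transErr
  rcases Nat.eq_zero_or_pos n with rfl | hn
  · have hE0 : E = ∅ := Finset.eq_empty_of_isEmpty E
    subst hE0
    simp
  have hn' : (0 : ℝ) < n := by positivity
  gcongr
  refine le_trans ?_ (Finset.sum_le_sum_of_subset_of_nonneg (Finset.subset_univ E) ?_)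
  · have h1 : (E.card : ℝ) = ∑ _i ∈ E, (1 : ℝ) := by simp
    rw [h1]
    apply Finset.sum_le_sum
    intro i hi
    rw [if_neg (hE i hi)]
  · intro i _ _
    split <;> norm_num

def consSet {D : ℕ} (hD : 1 ≤ D) (P Q : BStr D) (hbal : BalancedStr (bxor P Q))
    (xI : Fin D) (hxI0 : bxor P Q xI = false) : Finset HOTP :=
  insert ⟨hyp P Q, hyp_mem hD hbal⟩ ((sigma1 (bxor P Q)).attach.image fun w =>
    (⟨hyp P (bxor P (flip2 (bxor P Q) xI w.1)), hyp_mem hD (by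
      rw [bxor_cancel_left]
      exact balancedStr_flip2 hbal hxI0 (mem_sigma1.1 w.2))⟩ : HOTP))

lemma mem_consSet {D : ℕ} (hD : 1 ≤ D) (P Q : BStr D) (hbal : BalancedStr (bxor P Q))
    (xI : Fin D) (hxI0 : bxor P Q xI = false) {g : HOTP} :
    g ∈ consSet hD P Q hbal xI hxI0 ↔
      (g.1 = hyp P Q ∨ ∃ w, bxor P Q w = true ∧
        g.1 = hyp P (bxor P (flip2 (bxor P Q) xI w))) := by
  unfold consSet
  rw [Finset.mem_insert]
  constructor
  · rintro (rfl | hg)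
    · exact Or.inl rfl
    · obtain ⟨w, -, rfl⟩ := Finset.mem_image.1 hg
      exact Or.inr ⟨w.1, mem_sigma1.1 w.2, rfl⟩
  · rintro (hg | ⟨w, hw, hg⟩)
    · exact Or.inl (Subtype.ext hg)
    · refine Or.inr (Finset.mem_image.2 ⟨⟨w, mem_sigma1.2 hw⟩, Finset.mem_attach _ _, ?_⟩)
      exact (Subtype.ext hg).symm

set_option maxHeartbeats 1000000 in
lemma world0_bound (hAlg : InducedBy HOTP ψ Alg) {D n : ℕ} (hD : 1 ≤ D) (hn : 2 ≤ n)
    (P Q : BStr D) (hbal : BalancedStr (bxor P Q))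
    (hcard : (sigma0 (bxor P Q)).card = n) :
    ∃ S : Fin n → ℕ, Function.Injective S ∧
      ((Bad0 ψ P Q).card : ℝ) / n ≤ transErr Alg S (hyp P Q) := by
  have hD0 : 0 < D := hD
  set C : BStr D := bxor P Q with hCdef
  set e := (sigma0 C).orderIsoOfFin hcard with he
  set S : Fin n → ℕ := fun i => ((e i : Fin D) : ℕ) with hS
  have hSinj : Function.Injective S := by
    intro i j hij
    apply e.injective
    apply Subtype.ext
    exact Fin.ext hij
  refine ⟨S, hSinj, ?_⟩
  -- the ground truth labels every point of S with (false, ofFn P)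
  have hCe : ∀ j : Fin n, C ((e j : Fin D)) = false := fun j => mem_sigma0.1 (e j).2
  have hSj : ∀ j : Fin n, hyp P Q (S j) = (false, List.ofFn P) := fun j =>
    hyp_apply_false hD0 (hCe j)
  -- error at every index in Bad0
  have errAt : ∀ i : Fin n, (↑(e i) : Fin D) ∈ Bad0 ψ P Q →
      Alg (trainSeq S (hyp P Q) i) (S i) ≠ hyp P Q (S i) := by
    intro i hbad
    set xI : Fin D := (↑(e i) : Fin D) with hxI
    have hxI0 : C xI = false := hCe i
    set L : List (ℕ × Label) := trainSeq S (hyp P Q) i with hLdef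
    have hL : L = (List.ofFn fun j : Fin n => (S j, ((false : Bool), List.ofFn P))).eraseIdx i := by
      have hfun : (fun j : Fin n => (S j, hyp P Q (S j))) =
          (fun j : Fin n => (S j, ((false : Bool), List.ofFn P))) := by
        funext j
        rw [hSj]
      rw [hLdef]
      unfold trainSeq
      rw [hfun]
    have hlen : (List.ofFn fun j : Fin n => (S j, ((false : Bool), List.ofFn P))).length = n := by
      simp
    -- members of the training list
    have pmem : ∀ p ∈ L, ∃ j : Fin n, j ≠ i ∧ p = (S j, ((false : Bool), List.ofFn P)) := by
      intro p hp
      rw [hL, List.mem_eraseIdx_iff_getElem] at hp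
      obtain ⟨k, hk, hki, hval⟩ := hp
      rw [hlen] at hk
      refine ⟨⟨k, hk⟩, ?_, ?_⟩
      · intro hcon
        exact hki (congrArg Fin.val hcon)
      · rw [← hval, List.getElem_ofFn]
    have cover : ∀ j : Fin n, j ≠ i → (S j, ((false : Bool), List.ofFn P)) ∈ L := by
      intro j hj
      rw [hL, List.mem_eraseIdx_iff_getElem]
      refine ⟨(j : ℕ), by rw [hlen]; exact j.isLt, ?_, ?_⟩
      · intro hcon; exact hj (Fin.ext hcon)
      · rw [List.getElem_ofFn]
    have Lne : L ≠ [] := by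
      rw [hL]
      rw [List.eraseIdx_ne_nil_iff]
      left
      rw [hlen]
      exact hn
    -- consistency of the ground truth
    have cons0 : empRisk L (hyp P Q) = 0 := by
      rw [empRisk_eq_zero_iff Lne]
      intro p hp
      obtain ⟨j, -, rfl⟩ := pmem p hp
      exact hSj j
    -- the flipped alternatives
    have hflipbal : ∀ w : Fin D, C w = true → BalancedStr (bxor P (bxor P (flip2 C xI w))) := by
      intro w hw
      rw [bxor_cancel_left]
      exact balancedStr_flip2 hbal hxI0 hw
    have hflipmem : ∀ w : Fin D, C w = true → hyp P (bxor P (flip2 C xI w)) ∈ HOTP := by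
      intro w hw
      exact hyp_mem hD (hflipbal w hw)
    have consw : ∀ w : Fin D, C w = true → empRisk L (hyp P (bxor P (flip2 C xI w))) = 0 := by
      intro w hw
      rw [empRisk_eq_zero_iff Lne]
      intro p hp
      obtain ⟨j, hj, rfl⟩ := pmem p hp
      have hne1 : (↑(e j) : Fin D) ≠ xI := by
        intro hcon
        exact hj (e.injective (Subtype.ext hcon))
      have hne2 : (↑(e j) : Fin D) ≠ w := by
        intro hcon
        rw [← hcon] at hw
        rw [hCe j] at hw
        cases hw
      have : bxor P (bxor P (flip2 C xI w)) (↑(e j)) = false := by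
        rw [bxor_cancel_left, flip2_other hne1 hne2]
        exact hCe j
      exact hyp_apply_false hD0 this
    -- structure of consistent hypotheses
    have form : ∀ g : ℕ → Label, g ∈ HOTP → empRisk L g = 0 →
        g = hyp P Q ∨ ∃ w, C w = true ∧ g = hyp P (bxor P (flip2 C xI w)) := by
      intro g hg hrisk
      obtain ⟨d', A', B', hd', hbal', rfl⟩ := hg
      have hall := (empRisk_eq_zero_iff Lne _).1 hrisk
      obtain ⟨j₀, hj₀⟩ : ∃ j : Fin n, j ≠ i := by
        by_cases h0 : (i : ℕ) = 0
        · refine ⟨⟨1, by omega⟩, fun hcon => ?_⟩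
          have h5 : (1 : ℕ) = (i : ℕ) := congrArg Fin.val hcon
          omega
        · refine ⟨⟨0, by omega⟩, fun hcon => ?_⟩
          have h5 : (0 : ℕ) = (i : ℕ) := congrArg Fin.val hcon
          omega
      have h1 : hyp A' B' (S j₀) = ((false : Bool), List.ofFn P) := hall _ (cover j₀ hj₀)
      have h2 : List.ofFn A' = List.ofFn P := hyp_false_label h1
      have hdim : d' = D := by
        have := congrArg List.length h2
        simpa using this
      subst hdim
      have hPA : P = A' := (List.ofFn_inj.1 h2).symm
      subst hPA
      set C' := bxor P B' with hC'def
      have hzero : ∀ j : Fin n, j ≠ i → C' (↑(e j)) = false := by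
        intro j hj
        have h3 : hyp P B' (S j) = ((false : Bool), List.ofFn P) := hall _ (cover j hj)
        cases hb : C' (↑(e j))
        · rfl
        · rw [hyp_apply_true hD0 hb] at h3
          exact absurd (congrArg Prod.fst h3) (by simp)
      have hsub : ∀ z, z ∈ sigma0 C → z ≠ xI → z ∈ sigma0 C' := by
        intro z hz hzx
        have hj : e (e.symm ⟨z, hz⟩) = ⟨z, hz⟩ := e.apply_symm_apply _
        have hjne : e.symm ⟨z, hz⟩ ≠ i := by
          intro hcon
          apply hzx
          have h5 : e (e.symm ⟨z, hz⟩) = ⟨z, hz⟩ := e.apply_symm_apply _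
          rw [hcon] at h5
          exact (congrArg Subtype.val h5).symm
        have := hzero _ hjne
        rw [hj] at this
        exact mem_sigma0.2 this
      rcases balanced_superset_structure hbal hbal' hxI0 hsub with hCC | ⟨w, hw, hflip⟩
      · left
        have : B' = Q := by
          have : bxor P C' = bxor P C := by rw [hCC]
          rwa [hC'def, hCdef, bxor_cancel_left, bxor_cancel_left] at this
        rw [this]
      · right
        refine ⟨w, hw, ?_⟩
        have : B' = bxor P (flip2 C xI w) := by
          have : bxor P C' = bxor P (flip2 C xI w) := by rw [hflip]
          rwa [hC'def, bxor_cancel_left] at this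
        rw [this]
    -- the finite set of consistent hypotheses
    have hmem0 : hyp P Q ∈ HOTP := hyp_mem hD hbal
    have hTne : (consSet hD P Q hbal xI hxI0).Nonempty :=
      ⟨⟨hyp P Q, hmem0⟩, (mem_consSet hD P Q hbal xI hxI0).2 (Or.inl rfl)⟩
    have T_cons : ∀ g ∈ consSet hD P Q hbal xI hxI0, empRisk L (g : HOTP).1 = 0 := by
      intro g hg
      rcases (mem_consSet hD P Q hbal xI hxI0).1 hg with h | ⟨w, hw, h⟩
      · rw [h]; exact cons0
      · rw [h]; exact consw w hw
    have cons_memT : ∀ g : HOTP, empRisk L g.1 = 0 → g ∈ consSet hD P Q hbal xI hxI0 := by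
      intro g hg
      apply (mem_consSet hD P Q hbal xI hxI0).2
      exact form g.1 g.2 hg
    obtain ⟨m, hmT, hmin⟩ := Finset.exists_min_image _ (fun g : HOTP => ψ g (S i)) hTne
    obtain ⟨hstar, hst_cons, hst_min, hst_eq⟩ := hAlg L (S i)
      ⟨m, T_cons m hmT, fun g hg => hmin g (cons_memT g hg)⟩
    -- use badness
    obtain ⟨-, -, w₀, hw₀', hlt⟩ := Finset.mem_filter.1 hbad
    have hlt' : ψ ⟨hyp P (bxor P (flip2 C xI w₀)), hflipmem w₀ hw₀'⟩ (S i) <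
        ψ ⟨hyp P Q, hmem0⟩ (S i) := by
      rw [← Psi_mem ψ (hflipmem w₀ hw₀'), ← Psi_mem ψ hmem0]
      exact hlt
    have hstlt : ψ hstar (S i) < ψ (⟨hyp P Q, hmem0⟩ : HOTP) (S i) :=
      lt_of_le_of_lt (hst_min _ (consw w₀ hw₀')) hlt'
    have hstne : hstar.1 ≠ hyp P Q := by
      intro hcon
      have : hstar = (⟨hyp P Q, hmem0⟩ : HOTP) := Subtype.ext hcon
      rw [this] at hstlt
      exact lt_irrefl _ hstlt
    rcases (mem_consSet hD P Q hbal xI hxI0).1 (cons_memT hstar hst_cons) with h | ⟨w₁, hw₁, h⟩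
    · exact absurd h hstne
    have hxw₁ : xI ≠ w₁ := by
      intro hcon
      have hft : (false : Bool) = true := by
        rw [← hxI0, hcon]
        exact hw₁
      cases hft
    have hpred : Alg L (S i) = (true, List.ofFn (bxor P (flip2 C xI w₁))) := by
      rw [hst_eq, h]
      have hb1 : bxor P (bxor P (flip2 C xI w₁)) xI = true := by
        rw [bxor_cancel_left, flip2_left hxw₁, hxI0]
        rfl
      exact hyp_apply_true hD0 hb1
    rw [hpred, hSj i]
    simp
  -- count the errors

  have hsub0 : Bad0 ψ P Q ⊆ sigma0 C := by
    intro x hx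
    have := (Finset.mem_filter.1 hx).2.1
    exact mem_sigma0.2 this
  have hcardeq : (Finset.univ.filter fun i : Fin n => (↑(e i) : Fin D) ∈ Bad0 ψ P Q).card
      = (Bad0 ψ P Q).card := by
    apply Finset.card_bij (fun i _ => (↑(e i) : Fin D))
    · intro i hi
      exact (Finset.mem_filter.1 hi).2
    · intro i hi j hj hij
      exact e.injective (Subtype.ext hij)
    · intro x hx
      refine ⟨e.symm ⟨x, hsub0 hx⟩, Finset.mem_filter.2 ⟨Finset.mem_univ _, ?_⟩, ?_⟩
      · rw [e.apply_symm_apply]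
        exact hx
      · rw [e.apply_symm_apply]
  rw [← hcardeq]
  apply transErr_ge_card
  intro i hi
  exact errAt i (Finset.mem_filter.1 hi).2

end Dw

section E1
variable {D : ℕ}

def bnotStr (C : BStr D) : BStr D := fun z => !(C z)

lemma sigma0_bnot (C : BStr D) : sigma0 (bnotStr C) = sigma1 C := by
  ext z; simp [mem_sigma0, mem_sigma1, bnotStr]

lemma sigma1_bnot (C : BStr D) : sigma1 (bnotStr C) = sigma0 C := by
  ext z; simp [mem_sigma0, mem_sigma1, bnotStr]

lemma balanced_bnot {C : BStr D} (h : BalancedStr C) : BalancedStr (bnotStr C) := by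
  unfold BalancedStr at *
  rw [sigma0_bnot, sigma1_bnot]
  omega

lemma bnot_flip2 (C : BStr D) (x w : Fin D) :
    bnotStr (flip2 C x w) = flip2 (bnotStr C) x w := by
  funext z
  simp only [bnotStr, flip2, bxor]
  cases C z <;> cases evec x z <;> cases evec w z <;> rfl

lemma bnot_inj {C C' : BStr D} (h : bnotStr C = bnotStr C') : C = C' := by
  funext z
  have := congrFun h z
  simp only [bnotStr] at this
  cases hc : C z <;> cases hc' : C' z <;> simp_all

lemma flip2_comm (C : BStr D) (x w : Fin D) : flip2 C x w = flip2 C w x := by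
  funext z
  simp only [flip2, bxor]
  cases C z <;> cases evec x z <;> cases evec w z <;> rfl

lemma balancedStr_flip2' {C : BStr D} {x w : Fin D} (hb : BalancedStr C)
    (hx : C x = true) (hw : C w = false) : BalancedStr (flip2 C x w) := by
  rw [flip2_comm]
  exact balancedStr_flip2 hb hw hx

lemma balanced_superset_structure1 {C C' : BStr D} {x : Fin D}
    (hbC : BalancedStr C) (hbC' : BalancedStr C')
    (hx : C x = true) (hsub : ∀ z, z ∈ sigma1 C → z ≠ x → z ∈ sigma1 C') :
    C' = C ∨ ∃ w, C w = false ∧ C' = flip2 C x w := by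
  have hx' : bnotStr C x = false := by simp [bnotStr, hx]
  have hsub' : ∀ z, z ∈ sigma0 (bnotStr C) → z ≠ x → z ∈ sigma0 (bnotStr C') := by
    intro z hz hzx
    rw [sigma0_bnot] at hz ⊢
    exact hsub z hz hzx
  rcases balanced_superset_structure (balanced_bnot hbC) (balanced_bnot hbC') hx' hsub'
    with h | ⟨w, hw, h⟩
  · exact Or.inl (bnot_inj h)
  · refine Or.inr ⟨w, ?_, ?_⟩
    · simp only [bnotStr] at hw
      cases hcw : C w
      · rfl
      · rw [hcw] at hw; cases hw
    · rw [← bnot_flip2] at h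
      exact bnot_inj h
end E1

section E2
variable (ψ : HOTP → ℕ → NNReal) (Alg : List (ℕ × Label) → ℕ → Label)

def consSet1 {D : ℕ} (hD : 1 ≤ D) (P Q : BStr D) (hbal : BalancedStr (bxor P Q))
    (xI : Fin D) (hxI1 : bxor P Q xI = true) : Finset HOTP :=
  insert ⟨hyp P Q, hyp_mem hD hbal⟩ ((sigma0 (bxor P Q)).attach.image fun w =>
    (⟨hyp (bxor (flip2 (bxor P Q) xI w.1) Q) Q, hyp_mem hD (by
      rw [bxor_cancel_right]
      exact balancedStr_flip2' hbal hxI1 (mem_sigma0.1 w.2))⟩ : HOTP))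

lemma mem_consSet1 {D : ℕ} (hD : 1 ≤ D) (P Q : BStr D) (hbal : BalancedStr (bxor P Q))
    (xI : Fin D) (hxI1 : bxor P Q xI = true) {g : HOTP} :
    g ∈ consSet1 hD P Q hbal xI hxI1 ↔
      (g.1 = hyp P Q ∨ ∃ w, bxor P Q w = false ∧
        g.1 = hyp (bxor (flip2 (bxor P Q) xI w) Q) Q) := by
  unfold consSet1
  rw [Finset.mem_insert]
  constructor
  · rintro (rfl | hg)
    · exact Or.inl rfl
    · obtain ⟨w, -, rfl⟩ := Finset.mem_image.1 hg
      exact Or.inr ⟨w.1, mem_sigma0.1 w.2, rfl⟩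
  · rintro (hg | ⟨w, hw, hg⟩)
    · exact Or.inl (Subtype.ext hg)
    · refine Or.inr (Finset.mem_image.2 ⟨⟨w, mem_sigma0.2 hw⟩, Finset.mem_attach _ _, ?_⟩)
      exact (Subtype.ext hg).symm

set_option maxHeartbeats 1000000 in
lemma world1_bound (hAlg : InducedBy HOTP ψ Alg) {D n : ℕ} (hD : 1 ≤ D) (hn : 2 ≤ n)
    (P Q : BStr D) (hbal : BalancedStr (bxor P Q))
    (hcard : (sigma1 (bxor P Q)).card = n) :
    ∃ S : Fin n → ℕ, Function.Injective S ∧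
      ((Bad1 ψ P Q).card : ℝ) / n ≤ transErr Alg S (hyp P Q) := by
  have hD0 : 0 < D := hD
  set C : BStr D := bxor P Q with hCdef
  set e := (sigma1 C).orderIsoOfFin hcard with he
  set S : Fin n → ℕ := fun i => ((e i : Fin D) : ℕ) with hS
  have hSinj : Function.Injective S := by
    intro i j hij
    apply e.injective
    apply Subtype.ext
    exact Fin.ext hij
  refine ⟨S, hSinj, ?_⟩
  have hCe : ∀ j : Fin n, C ((e j : Fin D)) = true := fun j => mem_sigma1.1 (e j).2
  have hSj : ∀ j : Fin n, hyp P Q (S j) = (true, List.ofFn Q) := fun j =>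
    hyp_apply_true hD0 (hCe j)
  have errAt : ∀ i : Fin n, (↑(e i) : Fin D) ∈ Bad1 ψ P Q →
      Alg (trainSeq S (hyp P Q) i) (S i) ≠ hyp P Q (S i) := by
    intro i hbad
    set xI : Fin D := (↑(e i) : Fin D) with hxI
    have hxI1 : C xI = true := hCe i
    set L : List (ℕ × Label) := trainSeq S (hyp P Q) i with hLdef
    have hL : L = (List.ofFn fun j : Fin n => (S j, ((true : Bool), List.ofFn Q))).eraseIdx i := by
      have hfun : (fun j : Fin n => (S j, hyp P Q (S j))) =
          (fun j : Fin n => (S j, ((true : Bool), List.ofFn Q))) := by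
        funext j
        rw [hSj]
      rw [hLdef]
      unfold trainSeq
      rw [hfun]
    have hlen : (List.ofFn fun j : Fin n => (S j, ((true : Bool), List.ofFn Q))).length = n := by
      simp
    have pmem : ∀ p ∈ L, ∃ j : Fin n, j ≠ i ∧ p = (S j, ((true : Bool), List.ofFn Q)) := by
      intro p hp
      rw [hL, List.mem_eraseIdx_iff_getElem] at hp
      obtain ⟨k, hk, hki, hval⟩ := hp
      rw [hlen] at hk
      refine ⟨⟨k, hk⟩, ?_, ?_⟩
      · intro hcon
        exact hki (congrArg Fin.val hcon)
      · rw [← hval, List.getElem_ofFn]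
    have cover : ∀ j : Fin n, j ≠ i → (S j, ((true : Bool), List.ofFn Q)) ∈ L := by
      intro j hj
      rw [hL, List.mem_eraseIdx_iff_getElem]
      refine ⟨(j : ℕ), by rw [hlen]; exact j.isLt, ?_, ?_⟩
      · intro hcon; exact hj (Fin.ext hcon)
      · rw [List.getElem_ofFn]
    have Lne : L ≠ [] := by
      rw [hL]
      rw [List.eraseIdx_ne_nil_iff]
      left
      rw [hlen]
      exact hn
    have cons0 : empRisk L (hyp P Q) = 0 := by
      rw [empRisk_eq_zero_iff Lne]
      intro p hp
      obtain ⟨j, -, rfl⟩ := pmem p hp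
      exact hSj j
    have hflipbal : ∀ w : Fin D, C w = false →
        BalancedStr (bxor (bxor (flip2 C xI w) Q) Q) := by
      intro w hw
      rw [bxor_cancel_right]
      exact balancedStr_flip2' hbal hxI1 hw
    have hflipmem : ∀ w : Fin D, C w = false → hyp (bxor (flip2 C xI w) Q) Q ∈ HOTP := by
      intro w hw
      exact hyp_mem hD (hflipbal w hw)
    have consw : ∀ w : Fin D, C w = false → empRisk L (hyp (bxor (flip2 C xI w) Q) Q) = 0 := by
      intro w hw
      rw [empRisk_eq_zero_iff Lne]
      intro p hp
      obtain ⟨j, hj, rfl⟩ := pmem p hp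
      have hne1 : (↑(e j) : Fin D) ≠ xI := by
        intro hcon
        exact hj (e.injective (Subtype.ext hcon))
      have hne2 : (↑(e j) : Fin D) ≠ w := by
        intro hcon
        rw [← hcon] at hw
        rw [hCe j] at hw
        cases hw
      have hb2 : bxor (bxor (flip2 C xI w) Q) Q (↑(e j)) = true := by
        rw [bxor_cancel_right, flip2_other hne1 hne2]
        exact hCe j
      exact hyp_apply_true hD0 hb2
    have form : ∀ g : ℕ → Label, g ∈ HOTP → empRisk L g = 0 →
        g = hyp P Q ∨ ∃ w, C w = false ∧ g = hyp (bxor (flip2 C xI w) Q) Q := by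
      intro g hg hrisk
      obtain ⟨d', A', B', hd', hbal', rfl⟩ := hg
      have hall := (empRisk_eq_zero_iff Lne _).1 hrisk
      obtain ⟨j₀, hj₀⟩ : ∃ j : Fin n, j ≠ i := by
        by_cases h0 : (i : ℕ) = 0
        · refine ⟨⟨1, by omega⟩, fun hcon => ?_⟩
          have h5 : (1 : ℕ) = (i : ℕ) := congrArg Fin.val hcon
          omega
        · refine ⟨⟨0, by omega⟩, fun hcon => ?_⟩
          have h5 : (0 : ℕ) = (i : ℕ) := congrArg Fin.val hcon
          omega
      have h1 : hyp A' B' (S j₀) = ((true : Bool), List.ofFn Q) := hall _ (cover j₀ hj₀)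
      have h2 : List.ofFn B' = List.ofFn Q := hyp_true_label h1
      have hdim : d' = D := by
        have := congrArg List.length h2
        simpa using this
      subst hdim
      have hQB : Q = B' := (List.ofFn_inj.1 h2).symm
      subst hQB
      set C' := bxor A' Q with hC'def
      have hone : ∀ j : Fin n, j ≠ i → C' (↑(e j)) = true := by
        intro j hj
        have h3 : hyp A' Q (S j) = ((true : Bool), List.ofFn Q) := hall _ (cover j hj)
        cases hb : C' (↑(e j))
        · rw [hyp_apply_false hD0 hb] at h3
          exact absurd (congrArg Prod.fst h3) (by simp)
        · rfl
      have hsub : ∀ z, z ∈ sigma1 C → z ≠ xI → z ∈ sigma1 C' := by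
        intro z hz hzx
        have hj : e (e.symm ⟨z, hz⟩) = ⟨z, hz⟩ := e.apply_symm_apply _
        have hjne : e.symm ⟨z, hz⟩ ≠ i := by
          intro hcon
          apply hzx
          have h5 : e (e.symm ⟨z, hz⟩) = ⟨z, hz⟩ := e.apply_symm_apply _
          rw [hcon] at h5
          exact (congrArg Subtype.val h5).symm
        have := hone _ hjne
        rw [hj] at this
        exact mem_sigma1.2 this
      rcases balanced_superset_structure1 hbal hbal' hxI1 hsub with hCC | ⟨w, hw, hflip⟩
      · left
        have hA : A' = P := by
          have h6 : bxor C' Q = bxor C Q := by rw [hCC]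
          rwa [hC'def, hCdef, bxor_cancel_right, bxor_cancel_right] at h6
        rw [hA]
      · right
        refine ⟨w, hw, ?_⟩
        have hA : A' = bxor (flip2 C xI w) Q := by
          have h6 : bxor C' Q = bxor (flip2 C xI w) Q := by rw [hflip]
          rwa [hC'def, bxor_cancel_right] at h6
        rw [hA]
    have hmem0 : hyp P Q ∈ HOTP := hyp_mem hD hbal
    have hTne : (consSet1 hD P Q hbal xI hxI1).Nonempty :=
      ⟨⟨hyp P Q, hmem0⟩, (mem_consSet1 hD P Q hbal xI hxI1).2 (Or.inl rfl)⟩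
    have T_cons : ∀ g ∈ consSet1 hD P Q hbal xI hxI1, empRisk L (g : HOTP).1 = 0 := by
      intro g hg
      rcases (mem_consSet1 hD P Q hbal xI hxI1).1 hg with h | ⟨w, hw, h⟩
      · rw [h]; exact cons0
      · rw [h]; exact consw w hw
    have cons_memT : ∀ g : HOTP, empRisk L g.1 = 0 → g ∈ consSet1 hD P Q hbal xI hxI1 := by
      intro g hg
      apply (mem_consSet1 hD P Q hbal xI hxI1).2
      exact form g.1 g.2 hg
    obtain ⟨m, hmT, hmin⟩ := Finset.exists_min_image _ (fun g : HOTP => ψ g (S i)) hTne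
    obtain ⟨hstar, hst_cons, hst_min, hst_eq⟩ := hAlg L (S i)
      ⟨m, T_cons m hmT, fun g hg => hmin g (cons_memT g hg)⟩
    obtain ⟨-, -, w₀, hw₀', hlt⟩ := Finset.mem_filter.1 hbad
    have hlt' : ψ ⟨hyp (bxor (flip2 C xI w₀) Q) Q, hflipmem w₀ hw₀'⟩ (S i) <
        ψ ⟨hyp P Q, hmem0⟩ (S i) := by
      rw [← Psi_mem ψ (hflipmem w₀ hw₀'), ← Psi_mem ψ hmem0]
      exact hlt
    have hstlt : ψ hstar (S i) < ψ (⟨hyp P Q, hmem0⟩ : HOTP) (S i) :=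
      lt_of_le_of_lt (hst_min _ (consw w₀ hw₀')) hlt'
    have hstne : hstar.1 ≠ hyp P Q := by
      intro hcon
      have : hstar = (⟨hyp P Q, hmem0⟩ : HOTP) := Subtype.ext hcon
      rw [this] at hstlt
      exact lt_irrefl _ hstlt
    rcases (mem_consSet1 hD P Q hbal xI hxI1).1 (cons_memT hstar hst_cons) with h | ⟨w₁, hw₁, h⟩
    · exact absurd h hstne
    have hxw₁ : xI ≠ w₁ := by
      intro hcon
      have hft : (true : Bool) = false := by
        rw [← hxI1, hcon]
        exact hw₁
      cases hft
    have hpred : Alg L (S i) = (false, List.ofFn (bxor (flip2 C xI w₁) Q)) := by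
      rw [hst_eq, h]
      have hb1 : bxor (bxor (flip2 C xI w₁) Q) Q xI = false := by
        rw [bxor_cancel_right, flip2_left hxw₁, hxI1]
        rfl
      exact hyp_apply_false hD0 hb1
    rw [hpred, hSj i]
    simp
  have hsub1 : Bad1 ψ P Q ⊆ sigma1 C := by
    intro x hx
    have := (Finset.mem_filter.1 hx).2.1
    exact mem_sigma1.2 this
  have hcardeq : (Finset.univ.filter fun i : Fin n => (↑(e i) : Fin D) ∈ Bad1 ψ P Q).card
      = (Bad1 ψ P Q).card := by
    apply Finset.card_bij (fun i _ => (↑(e i) : Fin D))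
    · intro i hi
      exact (Finset.mem_filter.1 hi).2
    · intro i hi j hj hij
      exact e.injective (Subtype.ext hij)
    · intro x hx
      refine ⟨e.symm ⟨x, hsub1 hx⟩, Finset.mem_filter.2 ⟨Finset.mem_univ _, ?_⟩, ?_⟩
      · rw [e.apply_symm_apply]
        exact hx
      · rw [e.apply_symm_apply]
  rw [← hcardeq]
  apply transErr_ge_card
  intro i hi
  exact errAt i (Finset.mem_filter.1 hi).2

end E2

section F
variable {D : ℕ}

lemma ID1 (P Q : BStr D) (x w : Fin D) :
    bxor P (flip2 (bxor P Q) x w) = flip2 Q x w := by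
  funext z
  simp only [flip2, bxor, evec]
  cases P z <;> cases Q z <;> cases decide (z = x) <;> cases decide (z = w) <;> rfl

lemma ID2 (P Q : BStr D) (x w : Fin D) :
    bxor (flip2 (bxor P (flip2 Q x w)) x w) (flip2 Q x w) = flip2 P x w := by
  funext z
  simp only [flip2, bxor, evec]
  cases P z <;> cases Q z <;> cases decide (z = x) <;> cases decide (z = w) <;> rfl

lemma ID3 (P Q : BStr D) (x w : Fin D) :
    bxor (flip2 P x w) (flip2 (bxor (flip2 P x w) (flip2 Q x w)) x w) = Q := by
  funext z
  simp only [flip2, bxor, evec]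
  cases P z <;> cases Q z <;> cases decide (z = x) <;> cases decide (z = w) <;> rfl

lemma ID4 (P Q : BStr D) (x w : Fin D) :
    bxor (flip2 (bxor (flip2 P x w) Q) x w) Q = P := by
  funext z
  simp only [flip2, bxor, evec]
  cases P z <;> cases Q z <;> cases decide (z = x) <;> cases decide (z = w) <;> rfl

lemma FL_r (P Q : BStr D) (x w : Fin D) :
    bxor P (flip2 Q x w) = flip2 (bxor P Q) x w := by
  funext z
  simp only [flip2, bxor, evec]
  cases P z <;> cases Q z <;> cases decide (z = x) <;> cases decide (z = w) <;> rfl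

lemma FL_l (P Q : BStr D) (x w : Fin D) :
    bxor (flip2 P x w) Q = flip2 (bxor P Q) x w := by
  funext z
  simp only [flip2, bxor, evec]
  cases P z <;> cases Q z <;> cases decide (z = x) <;> cases decide (z = w) <;> rfl

lemma FL_b (P Q : BStr D) (x w : Fin D) :
    bxor (flip2 P x w) (flip2 Q x w) = bxor P Q := by
  funext z
  simp only [flip2, bxor, evec]
  cases P z <;> cases Q z <;> cases decide (z = x) <;> cases decide (z = w) <;> rfl
end F

section G
variable (ψ : HOTP → ℕ → NNReal)

def badFn {D : ℕ} (P Q : BStr D) (x : Fin D) : Prop :=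
  x ∈ Bad0 ψ P Q ∨ x ∈ Bad1 ψ P Q

lemma mem_Bad0_iff {D : ℕ} {P Q : BStr D} {x : Fin D} :
    x ∈ Bad0 ψ P Q ↔ (bxor P Q x = false ∧ ∃ w, bxor P Q w = true ∧
      Psi ψ (hyp P (bxor P (flip2 (bxor P Q) x w))) x < Psi ψ (hyp P Q) x) := by
  unfold Bad0
  rw [Finset.mem_filter]
  simp only [Finset.mem_univ, true_and]

lemma mem_Bad1_iff {D : ℕ} {P Q : BStr D} {x : Fin D} :
    x ∈ Bad1 ψ P Q ↔ (bxor P Q x = true ∧ ∃ w, bxor P Q w = false ∧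
      Psi ψ (hyp (bxor (flip2 (bxor P Q) x w) Q) Q) x < Psi ψ (hyp P Q) x) := by
  unfold Bad1
  rw [Finset.mem_filter]
  simp only [Finset.mem_univ, true_and]

lemma not_bad_left {D : ℕ} {P Q : BStr D} {x w : Fin D} (h : ¬ badFn ψ P Q x)
    (hx : bxor P Q x = false) (hw : bxor P Q w = true) :
    Psi ψ (hyp P Q) x ≤ Psi ψ (hyp P (bxor P (flip2 (bxor P Q) x w))) x :=
  le_of_not_gt fun hlt => h (Or.inl (mem_Bad0_iff ψ |>.2 ⟨hx, w, hw, hlt⟩))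

lemma not_bad_right {D : ℕ} {P Q : BStr D} {x w : Fin D} (h : ¬ badFn ψ P Q x)
    (hx : bxor P Q x = true) (hw : bxor P Q w = false) :
    Psi ψ (hyp P Q) x ≤ Psi ψ (hyp (bxor (flip2 (bxor P Q) x w) Q) Q) x :=
  le_of_not_gt fun hlt => h (Or.inr (mem_Bad1_iff ψ |>.2 ⟨hx, w, hw, hlt⟩))

lemma cycle0 (hψ : LocallyInjective HOTP ψ) {D : ℕ} (hD : 1 ≤ D) {P Q : BStr D}
    {x w : Fin D} (hbal : BalancedStr (bxor P Q))
    (hx : bxor P Q x = false) (hw : bxor P Q w = true) :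
    badFn ψ P Q x ∨ badFn ψ P (flip2 Q x w) x ∨
      badFn ψ (flip2 P x w) (flip2 Q x w) x ∨ badFn ψ (flip2 P x w) Q x := by
  by_contra hcon
  push_neg at hcon
  obtain ⟨hc1, hc2, hc3, hc4⟩ := hcon
  have hD0 : 0 < D := hD
  have hxw : x ≠ w := by
    intro hcc
    rw [hcc, hw] at hx
    cases hx
  -- xor values for the four pairs
  have hC2 : bxor P (flip2 Q x w) = flip2 (bxor P Q) x w := FL_r P Q x w
  have hC3 : bxor (flip2 P x w) (flip2 Q x w) = bxor P Q := FL_b P Q x w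
  have hC4 : bxor (flip2 P x w) Q = flip2 (bxor P Q) x w := FL_l P Q x w
  have hbal2 : BalancedStr (bxor P (flip2 Q x w)) := by
    rw [hC2]; exact balancedStr_flip2 hbal hx hw
  have hbal3 : BalancedStr (bxor (flip2 P x w) (flip2 Q x w)) := by
    rw [hC3]; exact hbal
  have hbal4 : BalancedStr (bxor (flip2 P x w) Q) := by
    rw [hC4]; exact balancedStr_flip2 hbal hx hw
  have hx2 : bxor P (flip2 Q x w) x = true := by
    rw [congrFun hC2 x, flip2_left hxw, hx]; rfl
  have hw2 : bxor P (flip2 Q x w) w = false := by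
    rw [congrFun hC2 w, flip2_right hxw, hw]; rfl
  have hx3 : bxor (flip2 P x w) (flip2 Q x w) x = false := by
    rw [congrFun hC3 x]; exact hx
  have hw3 : bxor (flip2 P x w) (flip2 Q x w) w = true := by
    rw [congrFun hC3 w]; exact hw
  have hx4 : bxor (flip2 P x w) Q x = true := by
    rw [congrFun hC4 x, flip2_left hxw, hx]; rfl
  have hw4 : bxor (flip2 P x w) Q w = false := by
    rw [congrFun hC4 w, flip2_right hxw, hw]; rfl
  -- the chain of inequalities
  have q1 : Psi ψ (hyp P Q) x ≤ Psi ψ (hyp P (flip2 Q x w)) x := by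
    have := not_bad_left ψ hc1 hx hw
    rwa [ID1 P Q x w] at this
  have q2 : Psi ψ (hyp P (flip2 Q x w)) x ≤ Psi ψ (hyp (flip2 P x w) (flip2 Q x w)) x := by
    have := not_bad_right ψ hc2 hx2 hw2
    rwa [ID2 P Q x w] at this
  have q3 : Psi ψ (hyp (flip2 P x w) (flip2 Q x w)) x ≤ Psi ψ (hyp (flip2 P x w) Q) x := by
    have := not_bad_left ψ hc3 hx3 hw3
    rwa [ID3 P Q x w] at this
  have q4 : Psi ψ (hyp (flip2 P x w) Q) x ≤ Psi ψ (hyp P Q) x := by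
    have := not_bad_right ψ hc4 hx4 hw4
    rwa [ID4 P Q x w] at this
  have heq : Psi ψ (hyp P Q) x = Psi ψ (hyp P (flip2 Q x w)) x :=
    le_antisymm q1 (le_trans q2 (le_trans q3 q4))
  have hm1 : hyp P Q ∈ HOTP := hyp_mem hD hbal
  have hm2 : hyp P (flip2 Q x w) ∈ HOTP := hyp_mem hD hbal2
  rw [Psi_mem ψ hm1, Psi_mem ψ hm2] at heq
  have := hψ (x : ℕ) heq
  have hfeq : hyp P Q = hyp P (flip2 Q x w) := congrArg Subtype.val this
  have hv1 : hyp P Q (x : ℕ) = (false, List.ofFn P) := hyp_apply_false hD0 hx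
  have hv2 : hyp P (flip2 Q x w) (x : ℕ) = (true, List.ofFn (flip2 Q x w)) :=
    hyp_apply_true hD0 hx2
  rw [hfeq, hv2] at hv1
  exact absurd (congrArg Prod.fst hv1) (by simp)

lemma cycle (hψ : LocallyInjective HOTP ψ) {D : ℕ} (hD : 1 ≤ D) {P Q : BStr D}
    {x w : Fin D} (hbal : BalancedStr (bxor P Q))
    (hne : bxor P Q x ≠ bxor P Q w) :
    badFn ψ P Q x ∨ badFn ψ P (flip2 Q x w) x ∨
      badFn ψ (flip2 P x w) (flip2 Q x w) x ∨ badFn ψ (flip2 P x w) Q x := by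
  cases hx : bxor P Q x with
  | false =>
    have hw : bxor P Q w = true := by
      cases hcw : bxor P Q w
      · rw [hx, hcw] at hne; exact absurd rfl hne
      · rfl
    exact cycle0 ψ hψ hD hbal hx hw
  | true =>
    have hw : bxor P Q w = false := by
      cases hcw : bxor P Q w
      · rfl
      · rw [hx, hcw] at hne; exact absurd rfl hne
    have hC2 : bxor P (flip2 Q x w) = flip2 (bxor P Q) x w := FL_r P Q x w
    have hbal2 : BalancedStr (bxor P (flip2 Q x w)) := by
      rw [hC2]; exact balancedStr_flip2' hbal hx hw
    have hxw : x ≠ w := by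
      intro hcc
      rw [hcc] at hx
      rw [hx] at hw
      cases hw
    have hx2 : bxor P (flip2 Q x w) x = false := by
      rw [congrFun hC2 x, flip2_left hxw, hx]; rfl
    have hw2 : bxor P (flip2 Q x w) w = true := by
      rw [congrFun hC2 w, flip2_right hxw, hw]; rfl
    have h := cycle0 ψ hψ hD hbal2 hx2 hw2
    rw [flip2_flip2] at h
    tauto
end G

section H
variable {D : ℕ}

lemma bool_not_ne {a b : Bool} (h : a ≠ b) : (!a) ≠ (!b) := by
  cases a <;> cases b <;> simp_all

lemma balancedStr_flip2'' {C : BStr D} {x w : Fin D} (hb : BalancedStr C)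
    (hne : C x ≠ C w) : BalancedStr (flip2 C x w) := by
  cases hx : C x <;> cases hw : C w
  · rw [hx, hw] at hne; exact absurd rfl hne
  · exact balancedStr_flip2 hb hx hw
  · exact balancedStr_flip2' hb hx hw
  · rw [hx, hw] at hne; exact absurd rfl hne

lemma flip2_ne {C : BStr D} {x w : Fin D} (hne : C x ≠ C w) :
    flip2 C x w x ≠ flip2 C x w w := by
  have hxw : x ≠ w := fun h => hne (by rw [h])
  rw [flip2_left hxw, flip2_right hxw]
  exact bool_not_ne hne

lemma countNe {C : BStr D} (hbal : BalancedStr C) (x : Fin D) :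
    (Finset.univ.filter fun w => C x ≠ C w).card = (sigma0 C).card := by
  by_cases hx : C x = false
  · have h : (Finset.univ.filter fun w => C x ≠ C w) = sigma1 C := by
      ext z
      simp only [Finset.mem_filter, Finset.mem_univ, true_and, mem_sigma1, hx]
      cases hz : C z <;> simp
    rw [h]
    exact hbal.symm
  · have hx' : C x = true := by
      cases hcx : C x
      · exact absurd hcx hx
      · rfl
    have h : (Finset.univ.filter fun w => C x ≠ C w) = sigma0 C := by
      ext z
      simp only [Finset.mem_filter, Finset.mem_univ, true_and, mem_sigma0, hx']
      cases hz : C z <;> simp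
    rw [h]

lemma card_sigma0_eq {d : ℕ} {C : BStr (4*d)} (hbal : BalancedStr C) :
    (sigma0 C).card = 2*d := by
  have h1 := two_card_sigma0 hbal
  omega

def Cbal (d : ℕ) : BStr (4*d) := fun i => decide (2*d ≤ (i:ℕ))

lemma bal_Cbal (d : ℕ) : BalancedStr (Cbal d) := by
  apply Finset.card_bij (fun (a : Fin (4*d)) (ha : a ∈ sigma0 (Cbal d)) =>
    (⟨a.val + 2*d, by
      have := mem_sigma0.1 ha
      simp only [Cbal, decide_eq_false_iff_not, not_le] at this
      omega⟩ : Fin (4*d)))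
  · intro a ha
    apply mem_sigma1.2
    simp [Cbal]
  · intro a ha b hb h
    have := congrArg Fin.val h
    simp only at this
    exact Fin.ext (by omega)
  · intro b hb
    have hble := mem_sigma1.1 hb
    simp only [Cbal, decide_eq_true_eq] at hble
    refine ⟨⟨b.val - 2*d, by omega⟩, ?_, ?_⟩
    · apply mem_sigma0.2
      simp only [Cbal, decide_eq_false_iff_not, not_le]
      omega
    · apply Fin.ext
      simp only
      omega
end H

section I
variable (ψ : HOTP → ℕ → NNReal)

def sw1 {D : ℕ} (t : (_ : BStr D × BStr D) × (Fin D × Fin D)) :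
    (_ : BStr D × BStr D) × (Fin D × Fin D) :=
  ⟨(t.1.1, flip2 t.1.2 t.2.1 t.2.2), t.2⟩

def sw2 {D : ℕ} (t : (_ : BStr D × BStr D) × (Fin D × Fin D)) :
    (_ : BStr D × BStr D) × (Fin D × Fin D) :=
  ⟨(flip2 t.1.1 t.2.1 t.2.2, flip2 t.1.2 t.2.1 t.2.2), t.2⟩

def sw3 {D : ℕ} (t : (_ : BStr D × BStr D) × (Fin D × Fin D)) :
    (_ : BStr D × BStr D) × (Fin D × Fin D) :=
  ⟨(flip2 t.1.1 t.2.1 t.2.2, t.1.2), t.2⟩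

def fB {D : ℕ} (t : (_ : BStr D × BStr D) × (Fin D × Fin D)) : ℕ :=
  if badFn ψ t.1.1 t.1.2 t.2.1 then 1 else 0

def Kset (D : ℕ) : Finset (BStr D × BStr D) :=
  Finset.univ.filter fun p => BalancedStr (bxor p.1 p.2)

def Wset {D : ℕ} (p : BStr D × BStr D) : Finset (Fin D × Fin D) :=
  Finset.univ.filter fun xw => bxor p.1 p.2 xw.1 ≠ bxor p.1 p.2 xw.2

lemma mem_Omega {D : ℕ} {t : (_ : BStr D × BStr D) × (Fin D × Fin D)} :
    t ∈ (Kset D).sigma Wset ↔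
      BalancedStr (bxor t.1.1 t.1.2) ∧ bxor t.1.1 t.1.2 t.2.1 ≠ bxor t.1.1 t.1.2 t.2.2 := by
  rw [Finset.mem_sigma]
  unfold Kset Wset
  rw [Finset.mem_filter, Finset.mem_filter]
  simp only [Finset.mem_univ, true_and]

lemma sw1_mem {D : ℕ} {t : (_ : BStr D × BStr D) × (Fin D × Fin D)}
    (ht : t ∈ (Kset D).sigma Wset) : sw1 t ∈ (Kset D).sigma Wset := by
  obtain ⟨hbal, hne⟩ := mem_Omega.1 ht
  apply mem_Omega.2
  unfold sw1
  simp only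
  rw [FL_r]
  exact ⟨balancedStr_flip2'' hbal hne, flip2_ne hne⟩

lemma sw2_mem {D : ℕ} {t : (_ : BStr D × BStr D) × (Fin D × Fin D)}
    (ht : t ∈ (Kset D).sigma Wset) : sw2 t ∈ (Kset D).sigma Wset := by
  obtain ⟨hbal, hne⟩ := mem_Omega.1 ht
  apply mem_Omega.2
  unfold sw2
  simp only
  rw [FL_b]
  exact ⟨hbal, hne⟩

lemma sw3_mem {D : ℕ} {t : (_ : BStr D × BStr D) × (Fin D × Fin D)}
    (ht : t ∈ (Kset D).sigma Wset) : sw3 t ∈ (Kset D).sigma Wset := by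
  obtain ⟨hbal, hne⟩ := mem_Omega.1 ht
  apply mem_Omega.2
  unfold sw3
  simp only
  rw [FL_l]
  exact ⟨balancedStr_flip2'' hbal hne, flip2_ne hne⟩

lemma sw1_invol {D : ℕ} (t : (_ : BStr D × BStr D) × (Fin D × Fin D)) :
    sw1 (sw1 t) = t := by
  unfold sw1
  simp only [flip2_flip2]

lemma sw2_invol {D : ℕ} (t : (_ : BStr D × BStr D) × (Fin D × Fin D)) :
    sw2 (sw2 t) = t := by
  unfold sw2
  simp only [flip2_flip2]

lemma sw3_invol {D : ℕ} (t : (_ : BStr D × BStr D) × (Fin D × Fin D)) :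
    sw3 (sw3 t) = t := by
  unfold sw3
  simp only [flip2_flip2]

lemma exists_bad (hψ : LocallyInjective HOTP ψ) (d : ℕ) (hd : 1 ≤ d) :
    ∃ P Q : BStr (4*d), BalancedStr (bxor P Q) ∧
      d ≤ (Bad0 ψ P Q).card + (Bad1 ψ P Q).card := by
  by_contra hcon
  push_neg at hcon
  have hD : 1 ≤ 4*d := by omega
  set Ω := (Kset (4*d)).sigma Wset with hΩ
  -- key pointwise bound from the cycle lemma
  have hkey : ∀ t ∈ Ω, 1 ≤ fB ψ t + fB ψ (sw1 t) + fB ψ (sw2 t) + fB ψ (sw3 t) := by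
    intro t ht
    obtain ⟨hbal, hne⟩ := mem_Omega.1 ht
    rcases cycle ψ hψ hD hbal hne with h | h | h | h
    · have : fB ψ t = 1 := if_pos h
      omega
    · have : fB ψ (sw1 t) = 1 := if_pos h
      omega
    · have : fB ψ (sw2 t) = 1 := if_pos h
      omega
    · have : fB ψ (sw3 t) = 1 := if_pos h
      omega
  -- reindexing: each swapped sum equals the plain sum
  have hre1 : ∑ t ∈ Ω, fB ψ (sw1 t) = ∑ t ∈ Ω, fB ψ t :=
    Finset.sum_nbij' (i := sw1) (j := sw1) (fun a ha => sw1_mem ha) (fun a ha => sw1_mem ha)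
      (fun a _ => sw1_invol a) (fun a _ => sw1_invol a) (fun a _ => rfl)
  have hre2 : ∑ t ∈ Ω, fB ψ (sw2 t) = ∑ t ∈ Ω, fB ψ t :=
    Finset.sum_nbij' (i := sw2) (j := sw2) (fun a ha => sw2_mem ha) (fun a ha => sw2_mem ha)
      (fun a _ => sw2_invol a) (fun a _ => sw2_invol a) (fun a _ => rfl)
  have hre3 : ∑ t ∈ Ω, fB ψ (sw3 t) = ∑ t ∈ Ω, fB ψ t :=
    Finset.sum_nbij' (i := sw3) (j := sw3) (fun a ha => sw3_mem ha) (fun a ha => sw3_mem ha)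
      (fun a _ => sw3_invol a) (fun a _ => sw3_invol a) (fun a _ => rfl)
  have hmain : Ω.card ≤ 4 * ∑ t ∈ Ω, fB ψ t := by
    calc Ω.card = ∑ _t ∈ Ω, 1 := Finset.card_eq_sum_ones Ω
    _ ≤ ∑ t ∈ Ω, (fB ψ t + fB ψ (sw1 t) + fB ψ (sw2 t) + fB ψ (sw3 t)) :=
        Finset.sum_le_sum hkey
    _ = ∑ t ∈ Ω, fB ψ t + ∑ t ∈ Ω, fB ψ (sw1 t) + ∑ t ∈ Ω, fB ψ (sw2 t)
        + ∑ t ∈ Ω, fB ψ (sw3 t) := by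
        rw [← Finset.sum_add_distrib, ← Finset.sum_add_distrib, ← Finset.sum_add_distrib]
    _ = 4 * ∑ t ∈ Ω, fB ψ t := by
        rw [hre1, hre2, hre3]
        ring
  -- compute the cardinality of Ω
  have hcardW : ∀ p ∈ Kset (4*d), (Wset p).card = 4*d*(2*d) := by
    intro p hp
    have hbal : BalancedStr (bxor p.1 p.2) := by
      have := Finset.mem_filter.1 hp
      exact this.2
    unfold Wset
    rw [Finset.card_filter]
    rw [Fintype.sum_prod_type]
    have hinner : ∀ x : Fin (4*d),
        (∑ w : Fin (4*d), if bxor p.1 p.2 x ≠ bxor p.1 p.2 w then 1 else 0) = 2*d := by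
      intro x
      rw [← Finset.card_filter]
      rw [countNe hbal x]
      exact card_sigma0_eq hbal
    rw [Finset.sum_congr rfl fun x _ => hinner x]
    simp [Finset.card_univ, mul_comm]
  have hOmegacard : Ω.card = (Kset (4*d)).card * (4*d*(2*d)) := by
    rw [hΩ, Finset.card_sigma]
    rw [Finset.sum_congr rfl hcardW]
    rw [Finset.sum_const, smul_eq_mul]
  -- bound the sum of fB
  have hfb : ∀ p ∈ Kset (4*d), (∑ xw ∈ Wset p, fB ψ ⟨p, xw⟩) + 2*d ≤ 2*d*d := by
    intro p hp
    have hbal : BalancedStr (bxor p.1 p.2) := (Finset.mem_filter.1 hp).2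
    have hbadcard : (Finset.univ.filter (badFn ψ p.1 p.2)).card
        = (Bad0 ψ p.1 p.2).card + (Bad1 ψ p.1 p.2).card := by
      have hun : Finset.univ.filter (badFn ψ p.1 p.2) = Bad0 ψ p.1 p.2 ∪ Bad1 ψ p.1 p.2 := by
        ext z
        simp only [Finset.mem_filter, Finset.mem_univ, true_and, Finset.mem_union, badFn]
      rw [hun]
      apply Finset.card_union_of_disjoint
      rw [Finset.disjoint_left]
      intro a ha hb
      have h0 := (mem_Bad0_iff ψ).1 ha |>.1
      have h1 := (mem_Bad1_iff ψ).1 hb |>.1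
      rw [h0] at h1
      cases h1
    have hsum : (∑ xw ∈ Wset p, fB ψ ⟨p, xw⟩)
        = 2*d * ((Bad0 ψ p.1 p.2).card + (Bad1 ψ p.1 p.2).card) := by
      unfold Wset
      rw [Finset.sum_filter]
      rw [Fintype.sum_prod_type]
      have hinner : ∀ x : Fin (4*d),
          (∑ w : Fin (4*d), if bxor p.1 p.2 x ≠ bxor p.1 p.2 w then fB ψ ⟨p, (x, w)⟩ else 0)
            = if badFn ψ p.1 p.2 x then 2*d else 0 := by
        intro x
        by_cases hb : badFn ψ p.1 p.2 x
        · rw [if_pos hb]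
          have : ∀ w : Fin (4*d),
              (if bxor p.1 p.2 x ≠ bxor p.1 p.2 w then fB ψ ⟨p, (x, w)⟩ else 0)
              = if bxor p.1 p.2 x ≠ bxor p.1 p.2 w then 1 else 0 := by
            intro w
            by_cases hc : bxor p.1 p.2 x ≠ bxor p.1 p.2 w
            · rw [if_pos hc, if_pos hc]
              exact if_pos hb
            · rw [if_neg hc, if_neg hc]
          rw [Finset.sum_congr rfl fun w _ => this w]
          rw [← Finset.card_filter, countNe hbal x, card_sigma0_eq hbal]
        · rw [if_neg hb]
          have : ∀ w : Fin (4*d),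
              (if bxor p.1 p.2 x ≠ bxor p.1 p.2 w then fB ψ ⟨p, (x, w)⟩ else 0) = 0 := by
            intro w
            by_cases hc : bxor p.1 p.2 x ≠ bxor p.1 p.2 w
            · rw [if_pos hc]
              exact if_neg hb
            · rw [if_neg hc]
          rw [Finset.sum_congr rfl fun w _ => this w]
          simp
      rw [Finset.sum_congr rfl fun x _ => hinner x]
      have hfact : ∀ x : Fin (4*d), (if badFn ψ p.1 p.2 x then 2*d else 0)
          = 2*d * (if badFn ψ p.1 p.2 x then 1 else 0) := by
        intro x
        by_cases hb : badFn ψ p.1 p.2 x <;> simp [hb]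
      rw [Finset.sum_congr rfl fun x _ => hfact x]
      rw [← Finset.mul_sum, ← Finset.card_filter, hbadcard]
    have hlt := hcon p.1 p.2 hbal
    rw [hsum]
    have hle1 : ((Bad0 ψ p.1 p.2).card + (Bad1 ψ p.1 p.2).card) + 1 ≤ d := hlt
    calc 2*d*((Bad0 ψ p.1 p.2).card + (Bad1 ψ p.1 p.2).card) + 2*d
        = 2*d*(((Bad0 ψ p.1 p.2).card + (Bad1 ψ p.1 p.2).card) + 1) := by ring
    _ ≤ 2*d*d := Nat.mul_le_mul_left _ hle1
  -- sum over all of Ω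
  have hsumtot : (∑ t ∈ Ω, fB ψ t) + 2*d*(Kset (4*d)).card ≤ 2*d*d*(Kset (4*d)).card := by
    rw [hΩ, Finset.sum_sigma]
    have h1 : (∑ p ∈ Kset (4*d), ∑ xw ∈ Wset p, fB ψ ⟨p, xw⟩) + 2*d*(Kset (4*d)).card
        = ∑ p ∈ Kset (4*d), ((∑ xw ∈ Wset p, fB ψ ⟨p, xw⟩) + 2*d) := by
      rw [Finset.sum_add_distrib, Finset.sum_const, smul_eq_mul]
      ring
    rw [h1]
    calc ∑ p ∈ Kset (4*d), ((∑ xw ∈ Wset p, fB ψ ⟨p, xw⟩) + 2*d)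
        ≤ ∑ _p ∈ Kset (4*d), 2*d*d := Finset.sum_le_sum hfb
    _ = 2*d*d*(Kset (4*d)).card := by
        rw [Finset.sum_const, smul_eq_mul]
        ring
  -- K is nonempty
  have hKne : ((fun _ => false : BStr (4*d)), Cbal d) ∈ Kset (4*d) := by
    apply Finset.mem_filter.2
    refine ⟨Finset.mem_univ _, ?_⟩
    have hb : bxor (fun _ => false) (Cbal d) = Cbal d := by
      funext z
      simp [bxor]
    rw [hb]
    exact bal_Cbal d
  have hKpos : 0 < (Kset (4*d)).card := Finset.card_pos.2 ⟨_, hKne⟩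
  -- final arithmetic
  have e1 : Ω.card = 8*(d*(d*(Kset (4*d)).card)) := by rw [hOmegacard]; ring
  have h1 : 8*(d*(d*(Kset (4*d)).card)) ≤ 4 * ∑ t ∈ Ω, fB ψ t := by
    rw [← e1]; exact hmain
  have h2'' := Nat.mul_le_mul_left 4 hsumtot
  have hL : 4 * ((∑ t ∈ Ω, fB ψ t) + 2*d*(Kset (4*d)).card)
      = 4*(∑ t ∈ Ω, fB ψ t) + 8*(d*(Kset (4*d)).card) := by ring
  have hR : 4 * (2*d*d*(Kset (4*d)).card) = 8*(d*(d*(Kset (4*d)).card)) := by ring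
  rw [hL, hR] at h2''
  have hm : 0 < d*(Kset (4*d)).card := Nat.mul_pos hd hKpos
  set s := ∑ t ∈ Ω, fB ψ t with hsdef
  set m := d*(Kset (4*d)).card with hmdef
  set n2 := d*m with hn2def
  omega
end I

/-- for every locally injective local regularizer `ψ` for `H_OTP`, every
learner induced by `ψ`, and every `d ≥ 1`, there is a sequence of `2d` distinct points
and a ground truth in `H_OTP` on which the transductive error is at least `1/4`. -/
theorem statement7 (ψ : HOTP → ℕ → NNReal) (hψ : LocallyInjective HOTP ψ)
    (Alg : List (ℕ × Label) → ℕ → Label) (hAlg : InducedBy HOTP ψ Alg)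
    (d : ℕ) (hd : 1 ≤ d) :
    ∃ S : Fin (2 * d) → ℕ, Function.Injective S ∧
      ∃ h ∈ HOTP, (1 : ℝ) / 4 ≤ transErr Alg S h := by
  obtain ⟨P, Q, hbal, hbig⟩ := exists_bad ψ hψ d hd
  have hD : 1 ≤ 4*d := by omega
  have hn : 2 ≤ 2*d := by omega
  have hd0 : (0:ℝ) < ((2*d : ℕ):ℝ) := by
    have : 0 < 2*d := by omega
    exact_mod_cast this
  by_cases hc : d ≤ 2*(Bad0 ψ P Q).card
  · have hcard : (sigma0 (bxor P Q)).card = 2*d := card_sigma0_eq hbal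
    obtain ⟨S, hSinj, hbound⟩ := world0_bound ψ Alg hAlg hD hn P Q hbal hcard
    refine ⟨S, hSinj, hyp P Q, hyp_mem hD hbal, le_trans ?_ hbound⟩
    rw [div_le_div_iff₀ (by norm_num) hd0]
    have hcast : (d:ℝ) ≤ 2*((Bad0 ψ P Q).card : ℝ) := by exact_mod_cast hc
    push_cast
    nlinarith
  · have hc1 : d ≤ 2*(Bad1 ψ P Q).card := by omega
    have hcard1 : (sigma1 (bxor P Q)).card = 2*d := by
      have h1 : (sigma0 (bxor P Q)).card = (sigma1 (bxor P Q)).card := hbal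
      have h2 := card_sigma0_eq hbal
      omega
    obtain ⟨S, hSinj, hbound⟩ := world1_bound ψ Alg hAlg hD hn P Q hbal hcard1
    refine ⟨S, hSinj, hyp P Q, hyp_mem hD hbal, le_trans ?_ hbound⟩
    rw [div_le_div_iff₀ (by norm_num) hd0]
    have hcast : (d:ℝ) ≤ 2*((Bad1 ψ P Q).card : ℝ) := by exact_mod_cast hc1
    push_cast
    nlinarith
end
end

section
/- Let d ≥ 1, let C ∈ {0,1}^{2d} be balanced, and let A ∈ {0,1}^{2d}. Then h_{A, C⊕A} is the unique hypothesis h ∈ H_OTP satisfying h(s) = (0, A) for every s ∈ σ0(C). -/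
open scoped Classical

noncomputable section

lemma bxor_cancel {d : ℕ} (A C : BStr d) : bxor A (bxor C A) = C := by
  funext i
  simp only [bxor]
  cases A i <;> cases C i <;> rfl

lemma sigma_card_sum {d : ℕ} (C : BStr d) : (sigma0 C).card + (sigma1 C).card = d := by
  classical
  have := Finset.card_filter_add_card_filter_not
    (s := (Finset.univ : Finset (Fin d))) (p := fun i => C i = false)
  simpa [sigma0, sigma1, Finset.filter_congr_decidable] using this

lemma balanced_card0 {d : ℕ} (C : BStr (2 * d)) (hC : BalancedStr C) :
    (sigma0 C).card = d := by
  have h := sigma_card_sum C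
  rw [← hC] at h
  omega

/-- `h_{A, C⊕A}` is the unique hypothesis in `H_OTP` mapping every
`s ∈ σ₀(C)` to `(0, A)`. -/
theorem statement10 (d : ℕ) (hd : 1 ≤ d) (C : BStr (2 * d)) (hC : BalancedStr C)
    (A : BStr (2 * d)) :
    hyp A (bxor C A) ∈ HOTP ∧
    (∀ s ∈ sigma0 C, hyp A (bxor C A) s = (false, List.ofFn A)) ∧
    ∀ h ∈ HOTP, (∀ s ∈ sigma0 C, h s = (false, List.ofFn A)) →
      h = hyp A (bxor C A) := by
  have hpos : 0 < 2 * d := by omega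
  have hkey : bxor A (bxor C A) = C := bxor_cancel A C
  have heval : ∀ s ∈ sigma0 C, hyp A (bxor C A) (s : ℕ) = (false, List.ofFn A) := by
    intro s hs
    have hsC : C s = false := by simpa [sigma0] using hs
    have hidx : (⟨(s : ℕ) % (2 * d), Nat.mod_lt _ hpos⟩ : Fin (2 * d)) = s := by
      ext; simp [Nat.mod_eq_of_lt s.isLt]
    rw [hyp, dif_pos hpos, hkey, hidx, hsC]
    simp
  refine ⟨⟨2 * d, A, bxor C A, by omega, by rw [hkey]; exact hC, rfl⟩, heval, ?_⟩
  rintro h ⟨d', A', B', hd', hbal', rfl⟩ hagree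
  have hpos' : 0 < d' := hd'
  -- sigma0 C is nonempty
  have hcard0 : (sigma0 C).card = d := balanced_card0 C hC
  obtain ⟨s0, hs0⟩ : (sigma0 C).Nonempty := by
    rw [← Finset.card_pos, hcard0]; omega
  -- from the agreement at s0, deduce List.ofFn A' = List.ofFn A
  have h0 := hagree s0 hs0
  rw [hyp, dif_pos hpos'] at h0
  have hofn : List.ofFn A' = List.ofFn A := by
    by_cases hb : bxor A' B' ⟨(s0 : ℕ) % d', Nat.mod_lt _ hpos'⟩ = true
    · rw [if_pos hb] at h0; exact absurd (congrArg Prod.fst h0) (by simp)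
    · rw [if_neg hb] at h0; exact congrArg Prod.snd h0
  have hdd : d' = 2 * d := by
    have := congrArg List.length hofn
    simpa using this
  subst hdd
  have hA : A' = A := by
    funext i
    have := congrArg (fun l => l[(i : ℕ)]?) hofn
    simpa [List.getElem?_ofFn, i.isLt] using this
  subst hA
  -- show bxor A' B' = C
  have hsub : sigma0 C ⊆ sigma0 (bxor A' B') := by
    intro s hs
    have h1 := hagree s hs
    rw [hyp, dif_pos hpos'] at h1
    have hidx : (⟨(s : ℕ) % (2 * d), Nat.mod_lt _ hpos'⟩ : Fin (2 * d)) = s := by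
      ext; simp [Nat.mod_eq_of_lt s.isLt]
    rw [hidx] at h1
    by_cases hb : bxor A' B' s = true
    · rw [if_pos hb] at h1
      exact absurd (congrArg Prod.fst h1) (by simp)
    · simp [sigma0, Bool.eq_false_iff.mpr hb]
  have hcard' : (sigma0 (bxor A' B')).card = d := balanced_card0 _ hbal'
  have hseteq : sigma0 C = sigma0 (bxor A' B') :=
    Finset.eq_of_subset_of_card_le hsub (by rw [hcard', hcard0])
  have hD : bxor A' B' = C := by
    funext i
    have hiff : i ∈ sigma0 (bxor A' B') ↔ i ∈ sigma0 C := by rw [hseteq]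
    simp [sigma0] at hiff
    cases hc : C i <;> cases hb : bxor A' B' i <;> simp_all
  have hB : B' = bxor C A' := by
    funext i
    have := congrFun hD i
    simp only [bxor] at this ⊢
    rw [← this]
    cases A' i <;> cases B' i <;> rfl
  rw [hB]
end
end

section
/- Let d ≥ 1, let C ∈ {0,1}^{2d} be balanced, and let B ∈ {0,1}^{2d}. Then h_{B⊕C, B} is the unique hypothesis h ∈ H_OTP satisfying h(s) = (1, B) for every s ∈ σ1(C). -/
open scoped Classical

noncomputable section

lemma hyp_apply_fin {d : ℕ} (hd : 0 < d) (A B : BStr d) (i : Fin d) :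
    hyp A B (i : ℕ) =
      if bxor A B i = true then (true, List.ofFn B) else (false, List.ofFn A) := by
  unfold hyp
  rw [dif_pos hd]
  have : (⟨(i : ℕ) % d, Nat.mod_lt _ hd⟩ : Fin d) = i := by
    ext; simp [Nat.mod_eq_of_lt i.isLt]
  rw [this]

lemma card_sigma1 {d : ℕ} (C : BStr (2 * d)) (hC : BalancedStr C) :
    (sigma1 C).card = d := by
  have h := Finset.card_filter_add_card_filter_not
    (s := (Finset.univ : Finset (Fin (2 * d)))) (p := fun i => C i = true)
  have h0 : (Finset.univ.filter fun i => ¬ C i = true) = sigma0 C := by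
    simp [sigma0]
  rw [h0] at h
  have hcard : (Finset.univ : Finset (Fin (2 * d))).card = 2 * d := by simp
  unfold BalancedStr at hC
  unfold sigma1 at *
  omega

/-- `h_{B⊕C, B}` is the unique hypothesis in `H_OTP` mapping every
`s ∈ σ₁(C)` to `(1, B)`. -/
theorem statement11 (d : ℕ) (hd : 1 ≤ d) (C : BStr (2 * d)) (hC : BalancedStr C)
    (B : BStr (2 * d)) :
    hyp (bxor B C) B ∈ HOTP ∧
    (∀ s ∈ sigma1 C, hyp (bxor B C) B s = (true, List.ofFn B)) ∧
    ∀ h ∈ HOTP, (∀ s ∈ sigma1 C, h s = (true, List.ofFn B)) →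
      h = hyp (bxor B C) B := by
  have h2d : 0 < 2 * d := by omega
  have key : bxor (bxor B C) B = C := by
    funext i
    show xor (xor (B i) (C i)) (B i) = C i
    cases B i <;> cases C i <;> rfl
  refine ⟨⟨2 * d, bxor B C, B, by omega, by rw [BalancedStr, key]; exact hC, rfl⟩, ?_, ?_⟩
  · intro s hs
    have hCs : C s = true := by simpa [sigma1] using hs
    rw [hyp_apply_fin h2d, key, if_pos hCs]
  · rintro h ⟨d', A', B', hd', hbal', rfl⟩ hagree
    have hd'pos : 0 < d' := hd'
    -- extract that labels agree
    have hlab : ∀ s ∈ sigma1 C, List.ofFn B' = List.ofFn B ∧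
        bxor A' B' ⟨(s : ℕ) % d', Nat.mod_lt _ hd'pos⟩ = true := by
      intro s hs
      have := hagree s hs
      unfold hyp at this
      rw [dif_pos hd'pos] at this
      by_cases hbx : bxor A' B' ⟨(s : ℕ) % d', Nat.mod_lt _ hd'pos⟩ = true
      · rw [if_pos hbx] at this
        exact ⟨(Prod.mk.injEq _ _ _ _ ▸ this).2, hbx⟩
      · rw [if_neg hbx] at this
        simp at this
    -- sigma1 C nonempty
    have hcardC : (sigma1 C).card = d := card_sigma1 C hC
    obtain ⟨s0, hs0⟩ : (sigma1 C).Nonempty := by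
      rw [← Finset.card_pos, hcardC]; omega
    have hofn : List.ofFn B' = List.ofFn B := (hlab s0 hs0).1
    have hd'eq : d' = 2 * d := by
      have := congrArg List.length hofn
      simpa using this
    subst hd'eq
    have hB : B' = B := List.ofFn_injective hofn
    subst hB
    have hsub : sigma1 C ⊆ sigma1 (bxor A' B') := by
      intro s hs
      have h2 := (hlab s hs).2
      have : (⟨(s : ℕ) % (2 * d), Nat.mod_lt _ hd'pos⟩ : Fin (2 * d)) = s := by
        ext; simp [Nat.mod_eq_of_lt s.isLt]
      rw [this] at h2
      simpa [sigma1] using h2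
    have hcardA : (sigma1 (bxor A' B')).card = d := card_sigma1 _ hbal'
    have hseq : sigma1 C = sigma1 (bxor A' B') :=
      Finset.eq_of_subset_of_card_le hsub (by omega)
    have hCA : bxor A' B' = C := by
      funext i
      have : i ∈ sigma1 C ↔ i ∈ sigma1 (bxor A' B') := by rw [hseq]
      simp only [sigma1, Finset.mem_filter, Finset.mem_univ, true_and] at this
      cases hc : C i <;> cases ha : bxor A' B' i
      · rfl
      · exact absurd (this.mpr ha) (by simp [hc])
      · exact absurd (this.mp hc) (by simp [ha])
      · rfl
    have hA : A' = bxor B' C := by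
      funext i
      have := congrFun hCA i
      revert this
      show xor (A' i) (B' i) = C i → A' i = xor (B' i) (C i)
      cases A' i <;> cases B' i <;> cases C i <;> simp
    rw [hA]
end
end

section
/- There exists a hypothesis class with distinct label sets that is not transductively learnable. Concretely: let X = Option ℕ and Y = Bool ⊕ (ℕ → Bool); for each f : ℕ → Bool define g_f : X → Y by g_f(some n) = inl(f(n)) and g_f(none) = inr(f), and let H = {g_f : f : ℕ → Bool}. Then H has distinct label sets but H is not transductively learnable. -/
open scoped Classical

noncomputable section

/-- For `f : ℕ → Bool`, the hypothesis `g_f : Option ℕ → Bool ⊕ (ℕ → Bool)` mapping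
`some n` to `inl (f n)` and `none` to `inr f`. -/
def gfun (f : ℕ → Bool) : Option ℕ → Bool ⊕ (ℕ → Bool) := fun x =>
  match x with
  | some n => Sum.inl (f n)
  | none => Sum.inr f

lemma eraseIdx_ofFn_congr {α : Type*} {n : ℕ} (g g' : Fin n → α) (i : Fin n)
    (h : ∀ j, j ≠ i → g j = g' j) :
    (List.ofFn g).eraseIdx i = (List.ofFn g').eraseIdx i := by
  apply List.ext_getElem
  · simp [List.length_eraseIdx]
  · intro j h1 h2
    rw [List.getElem_eraseIdx, List.getElem_eraseIdx]
    split
    · rename_i hji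
      have hj : j < n := lt_trans hji i.isLt
      simp only [List.getElem_ofFn]
      apply h
      intro e
      have := congrArg Fin.val e
      simp only at this
      omega
    · rename_i hji
      have hj : j + 1 < n := by
        have := h1; simp [List.length_eraseIdx, i.isLt] at this; omega
      simp only [List.getElem_ofFn]
      apply h
      intro e
      have := congrArg Fin.val e
      simp only at this
      omega

/-- the class `{g_f : f : ℕ → Bool}` has distinct label sets but is not
transductively learnable. -/
theorem statement17 :
    DistinctLabelSets (Set.range gfun) ∧ ¬ TransLearnable (Set.range gfun) := by
  constructor
  · rintro h ⟨f, rfl⟩ h' ⟨f', rfl⟩ hr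
    have hmem : Sum.inr f ∈ Set.range (gfun f') := by
      rw [← hr]; exact ⟨none, rfl⟩
    obtain ⟨x, hx⟩ := hmem
    cases x with
    | none =>
      simp only [gfun, Sum.inr.injEq] at hx
      rw [hx]
    | some k => simp [gfun] at hx
  · rintro ⟨Alg, m, hm⟩
    set ε : ℝ := 1/3 with hε
    set n : ℕ := m ε + 1 with hn
    have hn1 : 1 ≤ n := Nat.le_add_left 1 _
    set S : Fin n → Option ℕ := fun i => some (i : ℕ) with hS
    set ext : (Fin n → Bool) → (ℕ → Bool) :=
      fun f k => if h : k < n then f ⟨k, h⟩ else false with hext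
    -- key: some f has transErr ≥ 1/2
    have key : ∃ f : Fin n → Bool, (1:ℝ)/2 ≤ transErr Alg S (gfun (ext f)) := by
      have hsum : ∑ f : Fin n → Bool, ((1:ℝ)/2) ≤
          ∑ f : Fin n → Bool, transErr Alg S (gfun (ext f)) := by
        have swap : ∑ f : Fin n → Bool, transErr Alg S (gfun (ext f)) =
            (∑ i : Fin n, ∑ f : Fin n → Bool,
              (if Alg (trainSeq S (gfun (ext f)) i) (S i) = gfun (ext f) (S i)
                then (0:ℝ) else 1)) / n := by
          unfold transErr
          rw [← Finset.sum_div, Finset.sum_comm]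
          congr 1
          refine Finset.sum_congr rfl fun i _ => Finset.sum_congr rfl fun f _ => ?_
          congr
        rw [swap]
        have inner : ∀ i : Fin n, ((2:ℝ)^n / 2) ≤ ∑ f : Fin n → Bool,
            (if Alg (trainSeq S (gfun (ext f)) i) (S i) = gfun (ext f) (S i)
              then (0:ℝ) else 1) := by
          intro i
          set err : (Fin n → Bool) → ℝ := fun f =>
            (if Alg (trainSeq S (gfun (ext f)) i) (S i) = gfun (ext f) (S i)
              then (0:ℝ) else 1) with herr
          set φ : (Fin n → Bool) → (Fin n → Bool) :=
            fun f => Function.update f i (!f i) with hφ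
          have hφinv : Function.Involutive φ := by
            intro f
            funext j
            by_cases hj : j = i
            · subst hj; simp [hφ, Function.update_self]
            · simp [hφ, Function.update_of_ne hj]
          have hsame : ∀ f, trainSeq S (gfun (ext f)) i = trainSeq S (gfun (ext (φ f))) i := by
            intro f
            unfold trainSeq
            apply eraseIdx_ofFn_congr
            intro j hj
            have : ext f (j : ℕ) = ext (φ f) (j : ℕ) := by
              simp only [hext, hφ, j.isLt, dif_pos]
              rw [Function.update_of_ne (by simpa using hj)]
            simp [hS, gfun, this]
          have hpair : ∀ f, (1:ℝ) ≤ err f + err (φ f) := by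
            intro f
            have hne : gfun (ext f) (S i) ≠ gfun (ext (φ f)) (S i) := by
              simp only [hS, gfun, hext, i.isLt, dif_pos, hφ, Ne, Sum.inl.injEq]
              simp [Function.update_self]
            by_cases hc : Alg (trainSeq S (gfun (ext f)) i) (S i) = gfun (ext f) (S i)
            · have h1 : err (φ f) = 1 := by
                simp only [herr]
                rw [if_neg]
                rw [← hsame f, hc]
                exact hne
              have h0 : err f = 0 := if_pos hc
              rw [h0, h1]; norm_num
            · have : err f = 1 := by simp [herr, hc]
              rw [this]
              have : (0:ℝ) ≤ err (φ f) := by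
                simp only [herr]; split <;> norm_num
              linarith
          have hbij : ∑ f : Fin n → Bool, err f = ∑ f : Fin n → Bool, err (φ f) :=
            (Finset.sum_bijective φ hφinv.bijective (by simp) (fun f _ => rfl)).symm
          have h2 : 2 * ∑ f : Fin n → Bool, err f ≥ (2:ℝ)^n := by
            have : ∑ f : Fin n → Bool, ((1:ℝ))
                ≤ ∑ f : Fin n → Bool, (err f + err (φ f)) :=
              Finset.sum_le_sum (fun f _ => hpair f)
            rw [Finset.sum_add_distrib, ← hbij] at this
            simp only [Finset.sum_const, Finset.card_univ, Fintype.card_fun,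
              Fintype.card_fin, Fintype.card_bool, nsmul_eq_mul, mul_one] at this
            push_cast at this
            linarith
          linarith
        calc ∑ f : Fin n → Bool, ((1:ℝ)/2)
            = (∑ i : Fin n, ((2:ℝ)^n/2)) / n := by
              simp only [Finset.sum_const, Finset.card_univ, Fintype.card_fun,
                Fintype.card_fin, Fintype.card_bool, nsmul_eq_mul]
              push_cast
              field_simp
          _ ≤ _ := by
              gcongr
              exact inner _
      obtain ⟨f, _, hf⟩ := Finset.exists_le_of_sum_le Finset.univ_nonempty hsum
      exact ⟨f, hf⟩
    obtain ⟨f, hf⟩ := key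
    have := hm ε (by norm_num [hε]) (by norm_num [hε]) (gfun (ext f)) ⟨ext f, rfl⟩ n S
      (by omega)
    rw [hε] at this
    linarith
end
end
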